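/- arXiv:2101.07043 — 8 statements merged into one kernel-verified Lean document; each statement's English description precedes it below -/
import Mathlib

section
/- Under the FTPL caching policy with a constant learning rate η > 0, for every t ≥ 2 and every realization of the Gaussian perturbation with distinct perturbed counts, |S_t \ S_{t−1}| ≤ 1; that is, at most one file of the cache is replaced per slot. -/
/-- Under the FTPL caching policy with a constant learning rate `η > 0`,
for every `t ≥ 2` and every realization of the perturbation with distinct perturbed counts,
`|S_t \ S_{t−1}| ≤ 1`: at most one file of the cache is replaced per slot. -/
theorem ftpl_at_most_one_eviction_per_slot
    (N C : ℕ) (hC : 0 < C) (hCN : C < N)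
    (f : ℕ → Fin N)
    (X : ℕ → Fin N → ℝ)
    (hX : ∀ t i, X t i = ∑ τ ∈ Finset.Ico 1 t, if f τ = i then (1 : ℝ) else 0)
    (γ : Fin N → ℝ)
    (η : ℝ) (hη : 0 < η)
    -- all perturbed counts are distinct (this holds with probability one)
    (hdistinct : ∀ t, ∀ i j : Fin N, i ≠ j → X t i + η * γ i ≠ X t j + η * γ j)
    (S : ℕ → Finset (Fin N))
    (hScard : ∀ t, (S t).card = C)
    (hStop : ∀ t, ∀ i ∈ S t, ∀ j ∉ S t, X t j + η * γ j ≤ X t i + η * γ i)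
    (t : ℕ) (ht : 2 ≤ t) :
    (S t \ S (t - 1)).card ≤ 1 := by
  set a := f (t - 1) with ha
  -- X t i = X (t-1) i + (1 if f (t-1) = i else 0)
  have hstep : ∀ i, X t i = X (t-1) i + (if f (t-1) = i then (1:ℝ) else 0) := by
    intro i
    have ht1 : 1 ≤ t - 1 := by omega
    have ht' : t = (t - 1) + 1 := by omega
    rw [hX, hX, ht', Finset.sum_Ico_succ_top ht1]
    simp
  -- every i ∈ S t \ S (t-1) equals a
  have hsub : S t \ S (t-1) ⊆ {a} := by
    intro i hi
    rw [Finset.mem_sdiff] at hi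
    obtain ⟨hiS, hiS'⟩ := hi
    rw [Finset.mem_singleton]
    by_contra hia
    -- there is something that left the cache
    have hne : (S (t-1) \ S t).Nonempty := by
      rw [Finset.sdiff_nonempty]
      intro hsub'
      have := Finset.eq_of_subset_of_card_le hsub'
        (by rw [hScard, hScard])
      rw [this] at hiS'
      exact hiS' hiS
    obtain ⟨k, hk⟩ := hne
    rw [Finset.mem_sdiff] at hk
    obtain ⟨hkS', hkS⟩ := hk
    have hik : i ≠ k := fun h => hiS' (h ▸ hkS')
    -- at time t-1, k beats i strictly
    have h1 : X (t-1) i + η * γ i < X (t-1) k + η * γ k :=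
      lt_of_le_of_ne (hStop (t-1) k hkS' i hiS') (hdistinct (t-1) i k hik)
    -- at time t, i beats k
    have h2 : X t k + η * γ k ≤ X t i + η * γ i := hStop t i hiS k hkS
    have hXi : X t i = X (t-1) i := by
      rw [hstep i, if_neg (fun h => hia h.symm), add_zero]
    have hXk : X (t-1) k ≤ X t k := by
      rw [hstep k]; split <;> linarith
    rw [hXi] at h2
    linarith
  calc (S t \ S (t-1)).card ≤ ({a} : Finset (Fin N)).card := Finset.card_le_card hsub
    _ = 1 := Finset.card_singleton a
end

section
/- Under the FTPL caching policy with a constant learning rate η > 0, for every slot t the probability of a cache change is bounded as P(y_{t+1} ≠ y_t) ≤ 1/(sqrt(2π)·η), where the probability is over the Gaussian perturbation γ. -/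
open MeasureTheory ProbabilityTheory Real

section Aux

lemma aux_measurable_inf' {δ : Type*} [MeasurableSpace δ] {ι : Type*} {s : Finset ι}
    (hs : s.Nonempty) {f : ι → δ → ℝ} (hf : ∀ n ∈ s, Measurable (f n)) :
    Measurable (fun x => s.inf' hs (fun i => f i x)) := by
  have h : Measurable (s.inf' hs f) :=
    Finset.inf'_induction hs _ (fun _f hf _g hg => hf.inf hg) fun n hn => hf n hn
  convert h using 1
  ext x
  simp [Finset.inf'_apply]

lemma aux_measurable_sup' {δ : Type*} [MeasurableSpace δ] {ι : Type*} {s : Finset ι}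
    (hs : s.Nonempty) {f : ι → δ → ℝ} (hf : ∀ n ∈ s, Measurable (f n)) :
    Measurable (fun x => s.sup' hs (fun i => f i x)) := by
  have h : Measurable (s.sup' hs f) :=
    Finset.sup'_induction hs _ (fun _f hf _g hg => hf.sup hg) fun n hn => hf n hn
  convert h using 1
  ext x
  simp [Finset.sup'_apply]

lemma aux_gauss_Icc (a b : ℝ) :
    gaussianReal 0 1 (Set.Icc a b) ≤ ENNReal.ofReal ((b - a) / Real.sqrt (2 * Real.pi)) := by
  rw [gaussianReal_apply 0 one_ne_zero]
  have hb : ∀ x : ℝ, gaussianPDF 0 1 x ≤ ENNReal.ofReal (Real.sqrt (2 * Real.pi))⁻¹ := by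
    intro x
    refine ENNReal.ofReal_le_ofReal ?_
    rw [gaussianPDFReal]
    simp only [NNReal.coe_one, mul_one, sub_zero]
    have h1 : Real.exp (-x ^ 2 / 2) ≤ 1 := by
      rw [Real.exp_le_one_iff]
      have : (0:ℝ) ≤ x ^ 2 := sq_nonneg x
      nlinarith
    have h2 : (0:ℝ) ≤ (Real.sqrt (2 * Real.pi))⁻¹ := by positivity
    calc (Real.sqrt (2 * Real.pi))⁻¹ * Real.exp (-x ^ 2 / 2)
        ≤ (Real.sqrt (2 * Real.pi))⁻¹ * 1 := by nlinarith [Real.exp_pos (-x ^ 2 / 2)]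
      _ = (Real.sqrt (2 * Real.pi))⁻¹ := mul_one _
  calc ∫⁻ x in Set.Icc a b, gaussianPDF 0 1 x
      ≤ ∫⁻ _ in Set.Icc a b, ENNReal.ofReal (Real.sqrt (2 * Real.pi))⁻¹ :=
        lintegral_mono fun x => hb x
    _ = ENNReal.ofReal (Real.sqrt (2 * Real.pi))⁻¹ * volume (Set.Icc a b) := by
        rw [setLIntegral_const]
    _ = ENNReal.ofReal (Real.sqrt (2 * Real.pi))⁻¹ * ENNReal.ofReal (b - a) := by
        rw [Real.volume_Icc]
    _ = ENNReal.ofReal ((b - a) / Real.sqrt (2 * Real.pi)) := by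
        rw [← ENNReal.ofReal_mul (by positivity)]
        congr 1
        rw [div_eq_inv_mul]

lemma aux_topset_unique {α : Type*} (v : α → ℝ) (A B : Finset α)
    (hcard : A.card = B.card)
    (hA : ∀ i ∈ A, ∀ j ∉ A, v j < v i) (hB : ∀ i ∈ B, ∀ j ∉ B, v j < v i) : A = B := by
  by_contra hne
  have h1 : ¬ A ⊆ B := fun h => hne (Finset.eq_of_subset_of_card_le h (le_of_eq hcard.symm))
  have h2 : ¬ B ⊆ A := fun h => hne (Finset.eq_of_subset_of_card_le h (le_of_eq hcard)).symm
  obtain ⟨j, hjA, hjB⟩ := Finset.not_subset.1 h1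
  obtain ⟨k, hkB, hkA⟩ := Finset.not_subset.1 h2
  exact absurd (hA j hjA k hkA) (not_lt.2 (le_of_lt (hB k hkB j hjB)))

lemma aux_iIndepFun_congr {Ω : Type*} [MeasurableSpace Ω] {μ : Measure Ω}
    {ι : Type*} {β : ι → Type*} [m : ∀ i, MeasurableSpace (β i)] {f g : ∀ i, Ω → β i}
    (h : iIndepFun f μ) (hfg : ∀ᵐ ω ∂μ, ∀ i, f i ω = g i ω) :
    iIndepFun g μ := by
  rw [iIndepFun_iff_measure_inter_preimage_eq_mul] at h ⊢
  intro S sets hsets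
  have h1 : ((⋂ i ∈ S, f i ⁻¹' sets i : Set Ω)) =ᵐ[μ] ((⋂ i ∈ S, g i ⁻¹' sets i : Set Ω)) := by
    rw [Filter.eventuallyEq_set]
    filter_upwards [hfg] with ω hω
    simp only [Set.mem_iInter, Set.mem_preimage, hω]
  have h2 : ∀ i : ι, (f i ⁻¹' sets i : Set Ω) =ᵐ[μ] (g i ⁻¹' sets i : Set Ω) := by
    intro i
    rw [Filter.eventuallyEq_set]
    filter_upwards [hfg] with ω hω
    simp only [Set.mem_preimage, hω]
  rw [← measure_congr h1, h S hsets]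
  exact Finset.prod_congr rfl fun i _ => measure_congr (h2 i)

end Aux

/-- Under the FTPL caching policy with a constant learning rate `η > 0`,
for every slot `t` the probability of a cache change is bounded as
`P(y_{t+1} ≠ y_t) ≤ 1/(sqrt(2π)·η)`. -/
theorem ftpl_constant_rate_switching_probability
    {Ω : Type*} [MeasureSpace Ω] [IsProbabilityMeasure (ℙ : Measure Ω)]
    (N C : ℕ) (hC : 0 < C) (hCN : C < N)
    (f : ℕ → Fin N)
    (X : ℕ → Fin N → ℝ)
    (hX : ∀ t i, X t i = ∑ τ ∈ Finset.Ico 1 t, if f τ = i then (1 : ℝ) else 0)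
    (γ : Fin N → Ω → ℝ)
    (hγindep : iIndepFun γ ℙ)
    (hγgauss : ∀ i, Measure.map (γ i) ℙ = gaussianReal 0 1)
    (η : ℝ) (hη : 0 < η)
    (S : ℕ → Ω → Finset (Fin N))
    (hScard : ∀ t ω, (S t ω).card = C)
    (hStop : ∀ t ω, ∀ i ∈ S t ω, ∀ j ∉ S t ω,
      X t j + η * γ j ω ≤ X t i + η * γ i ω)
    (t : ℕ) (ht : 1 ≤ t) :
    ℙ {ω | S (t + 1) ω ≠ S t ω} ≤ ENNReal.ofReal (1 / (Real.sqrt (2 * Real.pi) * η)) := by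
  classical
  set i₀ := f t with hi₀def
  -- measurable modifications of γ
  have hmeasγ : ∀ i, AEMeasurable (γ i) ℙ := by
    intro i
    by_contra h
    have h0 := Measure.map_of_not_aemeasurable h
    rw [hγgauss i] at h0
    exact IsProbabilityMeasure.ne_zero (gaussianReal 0 1) h0
  set γ' : Fin N → Ω → ℝ := fun i => (hmeasγ i).mk (γ i) with hγ'def
  have hm' : ∀ i, Measurable (γ' i) := fun i => (hmeasγ i).measurable_mk
  have hae : ∀ i, γ i =ᵐ[ℙ] γ' i := fun i => (hmeasγ i).ae_eq_mk
  have hae_all : ∀ᵐ ω ∂ℙ, ∀ i, γ i ω = γ' i ω := ae_all_iff.2 hae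
  have hindep' : iIndepFun γ' ℙ :=
    aux_iIndepFun_congr hγindep hae_all
  have hγ'gauss : ∀ i, Measure.map (γ' i) ℙ = gaussianReal 0 1 := fun i =>
    (Measure.map_congr (hae i)).symm.trans (hγgauss i)
  -- pairwise null events
  have hnull : ∀ (i j : Fin N), i ≠ j → ∀ c : ℝ,
      ℙ {ω | η * γ' i ω - η * γ' j ω = c} = 0 := by
    intro i j hij c
    have hind : IndepFun (γ' i) (γ' j) ℙ := hindep'.indepFun hij
    have hmap : Measure.map (fun ω => (γ' i ω, γ' j ω)) ℙ = (Measure.map (γ' i) ℙ).prod (Measure.map (γ' j) ℙ) :=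
      (indepFun_iff_map_prod_eq_prod_map_map (hm' i).aemeasurable (hm' j).aemeasurable).1 hind
    have hs : MeasurableSet {p : ℝ × ℝ | η * p.1 - η * p.2 = c} :=
      measurableSet_eq_fun (by fun_prop) measurable_const
    have hre : {ω | η * γ' i ω - η * γ' j ω = c}
        = (fun ω => (γ' i ω, γ' j ω)) ⁻¹' {p : ℝ × ℝ | η * p.1 - η * p.2 = c} := rfl
    rw [hre, ← Measure.map_apply (by fun_prop) hs, hmap, hγ'gauss i, hγ'gauss j,
      Measure.prod_apply hs]
    have hz : ∀ x : ℝ,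
        gaussianReal 0 1 (Prod.mk x ⁻¹' {p : ℝ × ℝ | η * p.1 - η * p.2 = c}) = 0 := by
      intro x
      have hsub : (Prod.mk x ⁻¹' {p : ℝ × ℝ | η * p.1 - η * p.2 = c}) ⊆ {(η * x - c) / η} := by
        intro y hy
        simp only [Set.mem_preimage, Set.mem_setOf_eq] at hy
        simp only [Set.mem_singleton_iff]
        field_simp
        linarith
      exact measure_mono_null hsub
        ((gaussianReal_absolutelyContinuous 0 one_ne_zero) (measure_singleton _))
    rw [lintegral_congr hz, lintegral_zero]
  -- the bad (null) event
  set Ebad : Set Ω :=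
    {ω | ¬ ∀ i, γ i ω = γ' i ω} ∪
    ⋃ (i : Fin N), ⋃ (j : Fin N), ⋃ (_ : i ≠ j),
      ({ω | η * γ' i ω - η * γ' j ω = X t j - X t i} ∪
       {ω | η * γ' i ω - η * γ' j ω = X t j - X t i + 1} ∪
       {ω | η * γ' i ω - η * γ' j ω = X t j - X t i - 1}) with hEbaddef
  have hEbad : ℙ Ebad = 0 := by
    refine measure_union_null ?_ ?_
    · exact hae_all
    · refine measure_iUnion_null fun i => measure_iUnion_null fun j =>
        measure_iUnion_null fun hij => ?_
      exact measure_union_null (measure_union_null (hnull i j hij _) (hnull i j hij _))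
        (hnull i j hij _)
  -- the index set avoiding i₀
  set K : Finset (Fin N) := Finset.univ.erase i₀ with hKdef
  have hKcard : K.card = N - 1 := by
    rw [hKdef, Finset.card_erase_of_mem (Finset.mem_univ _), Finset.card_univ, Fintype.card_fin]
  have hCK : C ≤ K.card := by
    rw [hKcard]; exact Nat.le_pred_of_lt hCN
  set P : Finset (Finset {x // x ∈ K}) := (Finset.univ : Finset {x // x ∈ K}).powersetCard C
    with hPdef
  have hPne : P.Nonempty := by
    rw [hPdef]
    refine Finset.powersetCard_nonempty.2 ?_
    rwa [Finset.card_univ, Fintype.card_coe]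
  have hTcard : ∀ T ∈ P, T.card = C := fun T hT => (Finset.mem_powersetCard.1 hT).2
  have hTne : ∀ T ∈ P, T.Nonempty := fun T hT =>
    Finset.card_pos.1 (by rw [hTcard T hT]; exact hC)
  have hPattne : P.attach.Nonempty := by rwa [Finset.attach_nonempty_iff]
  set g : ({x // x ∈ K} → ℝ) → ℝ := fun w =>
    P.attach.sup' hPattne (fun T => T.1.inf' (hTne T.1 T.2) (fun j => X t j.1 + η * w j))
    with hgdef
  have hgmeas : Measurable g := by
    refine aux_measurable_sup' hPattne fun T _ => ?_
    refine aux_measurable_inf' (hTne T.1 T.2) fun j _ => ?_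
    exact measurable_const.add (measurable_const.mul (measurable_pi_apply j))
  set W : Ω → ({x // x ∈ K} → ℝ) := fun ω j => γ' j.1 ω with hWdef
  have hWmeas : Measurable W := measurable_pi_lambda _ fun j => hm' j.1
  set B : Set Ω := {ω | g (W ω) - X t i₀ - 1 ≤ η * γ' i₀ ω ∧ η * γ' i₀ ω ≤ g (W ω) - X t i₀}
    with hBdef
  -- containment
  have hsub : {ω | S (t + 1) ω ≠ S t ω} ⊆ Ebad ∪ B := by
    intro ω hω
    by_cases hE : ω ∈ Ebad
    · exact Or.inl hE
    right
    rw [hEbaddef] at hE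
    simp only [Set.mem_union, Set.mem_iUnion, Set.mem_setOf_eq, not_or, not_exists,
      not_not] at hE
    obtain ⟨hgood1, hgood2⟩ := hE
    have hgood2' : ∀ i j : Fin N, i ≠ j →
        η * γ' i ω - η * γ' j ω ≠ X t j - X t i ∧
        η * γ' i ω - η * γ' j ω ≠ X t j - X t i + 1 ∧
        η * γ' i ω - η * γ' j ω ≠ X t j - X t i - 1 := by
      intro i j hij
      have := hgood2 i j hij
      exact ⟨this.1.1, this.1.2, this.2⟩
    set v : Fin N → ℝ := fun j => X t j + η * γ j ω with hvdef
    set v' : Fin N → ℝ := fun j => X (t + 1) j + η * γ j ω with hv'def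
    have hv_ne : ∀ i j : Fin N, i ≠ j →
        v i ≠ v j ∧ v i ≠ v j + 1 ∧ v i ≠ v j - 1 := by
      intro i j hij
      obtain ⟨h1, h2, h3⟩ := hgood2' i j hij
      rw [← hgood1 i, ← hgood1 j] at h1 h2 h3
      refine ⟨fun h => h1 ?_, fun h => h2 ?_, fun h => h3 ?_⟩ <;>
        (rw [hvdef] at h; simp only at h; linarith)
    have hXsucc : ∀ j, X (t + 1) j = X t j + (if f t = j then (1:ℝ) else 0) := by
      intro j
      rw [hX, hX, Finset.sum_Ico_succ_top ht]
    have hite : ∀ j, (if f t = j then (1:ℝ) else 0) = (if j = i₀ then (1:ℝ) else 0) := by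
      intro j
      by_cases h : j = i₀
      · rw [if_pos h, if_pos (h.trans hi₀def).symm]
      · rw [if_neg h, if_neg fun hh => h (hi₀def.trans hh).symm]
    have hv' : ∀ j, v' j = v j + (if j = i₀ then (1:ℝ) else 0) := by
      intro j
      simp only [hv'def, hvdef]
      rw [hXsucc j, hite j]
      ring
    have hstrict_t : ∀ i ∈ S t ω, ∀ j ∉ S t ω, v j < v i := by
      intro i hi j hj
      have hne : j ≠ i := fun h => hj (h ▸ hi)
      exact lt_of_le_of_ne (hStop t ω i hi j hj) (hv_ne j i hne).1
    have hstrict_t1 : ∀ i ∈ S (t + 1) ω, ∀ j ∉ S (t + 1) ω, v' j < v' i := by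
      intro i hi j hj
      have hne : j ≠ i := fun h => hj (h ▸ hi)
      refine lt_of_le_of_ne (hStop (t + 1) ω i hi j hj) ?_
      rw [hv' i, hv' j]
      obtain ⟨e1, e2, e3⟩ := hv_ne j i hne
      by_cases hji : j = i₀ <;> by_cases hii : i = i₀
      · exact absurd (hji.trans hii.symm) hne
      · subst hji
        rw [if_pos rfl, if_neg hii]
        intro h
        exact e3 (by linarith)
      · subst hii
        rw [if_neg hji, if_pos rfl]
        intro h
        exact e2 (by linarith)
      · rw [if_neg hji, if_neg hii]
        intro h
        exact e1 (by linarith)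
    have hi0_not : i₀ ∉ S t ω := by
      intro hmem
      refine hω ?_
      refine aux_topset_unique v' _ _ (by rw [hScard, hScard]) hstrict_t1 ?_
      intro i hi j hj
      have hji : j ≠ i₀ := fun h => hj (h ▸ hmem)
      have h1 := hstrict_t i hi j hj
      rw [hv' j, hv' i]
      simp only [hji, if_neg, if_false]
      split_ifs <;> linarith
    have hi0_in : i₀ ∈ S (t + 1) ω := by
      by_contra hni
      refine hω ?_
      refine aux_topset_unique v _ _ (by rw [hScard, hScard]) ?_ hstrict_t
      intro i hi j hj
      have hii : i ≠ i₀ := fun h => hni (h ▸ hi)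
      have h1 := hstrict_t1 i hi j hj
      rw [hv' i, hv' j] at h1
      simp only [hii, if_neg, if_false] at h1
      split_ifs at h1 <;> linarith
    -- T0 and m0
    have hmemK : ∀ j ∈ S t ω, j ∈ K := fun j hj =>
      Finset.mem_erase.2 ⟨fun h => hi0_not (h ▸ hj), Finset.mem_univ j⟩
    set T0 : Finset {x // x ∈ K} := (S t ω).subtype (· ∈ K) with hT0def
    have hT0mem : ∀ x : {x // x ∈ K}, x ∈ T0 ↔ x.1 ∈ S t ω := by
      intro x; rw [hT0def]; simp [Finset.mem_subtype]
    have hT0card : T0.card = C := by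
      rw [hT0def, Finset.card_subtype, Finset.filter_true_of_mem hmemK, hScard]
    have hT0P : T0 ∈ P := Finset.mem_powersetCard.2 ⟨Finset.subset_univ _, hT0card⟩
    have hT0ne : T0.Nonempty := Finset.card_pos.1 (by rw [hT0card]; exact hC)
    set m0 : ℝ := T0.inf' hT0ne (fun j => v j.1) with hm0def
    obtain ⟨j0, hj0T0, hj0eq⟩ := Finset.exists_mem_eq_inf' hT0ne (fun j : {x // x ∈ K} => v j.1)
    have hj0S : j0.1 ∈ S t ω := (hT0mem j0).1 hj0T0
    have hm0_le : ∀ j ∈ S t ω, m0 ≤ v j := by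
      intro j hj
      have hxj : (⟨j, hmemK j hj⟩ : {x // x ∈ K}) ∈ T0 := (hT0mem _).2 hj
      exact Finset.inf'_le _ hxj
    have hWv : ∀ j : {x // x ∈ K}, X t j.1 + η * W ω j = v j.1 := by
      intro j
      rw [hWdef, hvdef]
      simp only
      rw [← hgood1 j.1]
    have hg_eq : g (W ω) = m0 := by
      have hgapp : g (W ω) = P.attach.sup' hPattne
          (fun T => T.1.inf' (hTne T.1 T.2) (fun j => X t j.1 + η * W ω j)) := by
        simp only [hgdef]
      have hinfT0 : T0.inf' hT0ne (fun j => X t j.1 + η * W ω j) = m0 :=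
        (Finset.inf'_congr hT0ne rfl (fun j _ => hWv j)).trans hm0def.symm
      rw [hgapp]
      refine le_antisymm ?_ ?_
      · refine Finset.sup'_le _ _ ?_
        intro T _
        by_cases hTT : ∃ k ∈ T.1, k.1 ∉ S t ω
        · obtain ⟨k, hkT, hkS⟩ := hTT
          have h1 : T.1.inf' (hTne T.1 T.2) (fun j => X t j.1 + η * W ω j) ≤ X t k.1 + η * W ω k :=
            Finset.inf'_le _ hkT
          have h2 : v k.1 < v j0.1 := hstrict_t j0.1 hj0S k.1 hkS
          have h3 : m0 = v j0.1 := hm0def.trans hj0eq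
          rw [hWv k] at h1
          linarith
        · push_neg at hTT
          have hsubT : T.1 ⊆ T0 := fun k hk => (hT0mem k).2 (hTT k hk)
          have hTeq : T.1 = T0 := Finset.eq_of_subset_of_card_le hsubT
            (by rw [hT0card, hTcard T.1 T.2])
          rw [← hinfT0]
          refine le_of_eq ?_
          congr 1
      · rw [← hinfT0]
        exact Finset.le_sup' (f := fun T : {x // x ∈ P} =>
          T.1.inf' (hTne T.1 T.2) (fun j => X t j.1 + η * W ω j)) (Finset.mem_attach P ⟨T0, hT0P⟩)
    -- the two bounds on v i₀
    have hbound1 : v i₀ < m0 := by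
      have h := hstrict_t j0.1 hj0S i₀ hi0_not
      rw [hm0def.trans hj0eq]
      exact h
    have hbound2 : m0 - 1 ≤ v i₀ := by
      have hnsub : ¬ S t ω ⊆ S (t + 1) ω := by
        intro hss
        have heq : S t ω = S (t + 1) ω := Finset.eq_of_subset_of_card_le hss
          (by rw [hScard, hScard])
        exact hi0_not (heq ▸ hi0_in)
      obtain ⟨j1, hj1t, hj1t1⟩ := Finset.not_subset.1 hnsub
      have h1 : X (t + 1) j1 + η * γ j1 ω ≤ X (t + 1) i₀ + η * γ i₀ ω :=
        hStop (t + 1) ω i₀ hi0_in j1 hj1t1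
      have h2 : v' j1 ≤ v' i₀ := h1
      have hj1i : j1 ≠ i₀ := fun h => hi0_not (h ▸ hj1t)
      rw [hv' j1, hv' i₀] at h2
      rw [if_neg hj1i, if_pos rfl] at h2
      have h3 : m0 ≤ v j1 := hm0_le j1 hj1t
      linarith
    -- conclude ω ∈ B
    have hvi0 : v i₀ = X t i₀ + η * γ' i₀ ω := by
      rw [hvdef]
      simp only
      rw [hgood1 i₀]
    rw [hBdef]
    simp only [Set.mem_setOf_eq]
    rw [hg_eq]
    constructor <;> [skip; skip] <;> rw [hvi0] at hbound1 hbound2 <;> [linarith; linarith]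
  -- measure computation
  have hBpre : B = (fun ω => (W ω, γ' i₀ ω)) ⁻¹'
      {p : ({x // x ∈ K} → ℝ) × ℝ | g p.1 - X t i₀ - 1 ≤ η * p.2 ∧ η * p.2 ≤ g p.1 - X t i₀} :=
    rfl
  set sB : Set (({x // x ∈ K} → ℝ) × ℝ) :=
    {p | g p.1 - X t i₀ - 1 ≤ η * p.2 ∧ η * p.2 ≤ g p.1 - X t i₀} with hsBdef
  have hsBmeas : MeasurableSet sB := by
    refine MeasurableSet.inter ?_ ?_
    · exact measurableSet_le
        (((hgmeas.comp measurable_fst).sub measurable_const).sub measurable_const)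
        (measurable_const.mul measurable_snd)
    · exact measurableSet_le (measurable_const.mul measurable_snd)
        ((hgmeas.comp measurable_fst).sub measurable_const)
  have hpair : Measurable (fun ω => (W ω, γ' i₀ ω)) := hWmeas.prodMk (hm' i₀)
  have hindW : IndepFun W (γ' i₀) ℙ := by
    have hdisj : Disjoint K ({i₀} : Finset (Fin N)) := by
      rw [Finset.disjoint_singleton_right, hKdef]
      exact Finset.notMem_erase _ _
    have h := hindep'.indepFun_finset K {i₀} hdisj hm'
    have h2 := h.comp measurable_id
      (measurable_pi_apply (⟨i₀, Finset.mem_singleton_self i₀⟩ : ({i₀} : Finset (Fin N))))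
    exact h2
  have hmapprod : Measure.map (fun ω => (W ω, γ' i₀ ω)) ℙ = (Measure.map W ℙ).prod (Measure.map (γ' i₀) ℙ) :=
    (indepFun_iff_map_prod_eq_prod_map_map hWmeas.aemeasurable (hm' i₀).aemeasurable).1 hindW
  have hprob : IsProbabilityMeasure (Measure.map W ℙ) := Measure.isProbabilityMeasure_map hWmeas.aemeasurable
  have hBval : ℙ B ≤ ENNReal.ofReal (1 / (Real.sqrt (2 * Real.pi) * η)) := by
    rw [hBpre, ← Measure.map_apply hpair hsBmeas, hmapprod, hγ'gauss i₀,
      Measure.prod_apply hsBmeas]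
    have hslice : ∀ w : {x // x ∈ K} → ℝ,
        gaussianReal 0 1 (Prod.mk w ⁻¹' sB)
          ≤ ENNReal.ofReal (1 / (Real.sqrt (2 * Real.pi) * η)) := by
      intro w
      have hset : Prod.mk w ⁻¹' sB
          = Set.Icc ((g w - X t i₀ - 1) / η) ((g w - X t i₀) / η) := by
        ext x
        simp only [hsBdef, Set.mem_preimage, Set.mem_setOf_eq, Set.mem_Icc]
        rw [div_le_iff₀ hη, le_div_iff₀ hη]
        constructor <;> intro h <;> exact ⟨by linarith [h.1, h.2], by linarith [h.1, h.2]⟩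
      rw [hset]
      refine le_trans (aux_gauss_Icc _ _) (le_of_eq ?_)
      congr 1
      have hs2 : (0:ℝ) < Real.sqrt (2 * Real.pi) := Real.sqrt_pos.2 (by positivity)
      field_simp
      ring
    calc ∫⁻ w, gaussianReal 0 1 (Prod.mk w ⁻¹' sB) ∂(Measure.map W ℙ)
        ≤ ∫⁻ _, ENNReal.ofReal (1 / (Real.sqrt (2 * Real.pi) * η)) ∂(Measure.map W ℙ) :=
          lintegral_mono fun w => hslice w
      _ = ENNReal.ofReal (1 / (Real.sqrt (2 * Real.pi) * η)) := by
          simp [lintegral_const]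
  calc ℙ {ω | S (t + 1) ω ≠ S t ω} ≤ ℙ (Ebad ∪ B) := measure_mono hsub
    _ ≤ ℙ Ebad + ℙ B := measure_union_le _ _
    _ = ℙ B := by rw [hEbad, zero_add]
    _ ≤ ENNReal.ofReal (1 / (Real.sqrt (2 * Real.pi) * η)) := hBval
end

section
/- Under the anytime FTPL caching policy with learning rates η_t = α·sqrt(t) (α > 0), the fetch rate FR_t = (1/t)·Σ_{τ=2}^t ‖y_τ − y_{τ−1}‖_1 satisfies limsup_{t→∞} FR_t = 0 almost surely. -/
open MeasureTheory ProbabilityTheory Real Filter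
open scoped ENNReal

section FTPLAux


open scoped Classical in
/-- count of "bad" times t in [1,T]: |A t + β √t c| ≤ 1 + β |c|. -/
noncomputable def ftplCnt (A : ℕ → ℝ) (β : ℝ) (T : ℕ) (c : ℝ) : ℕ :=
  ((Finset.Icc 1 T).filter (fun t => |A t + β * Real.sqrt t * c| ≤ 1 + β * |c|)).card

lemma ftplSum_inv_sqrt_le (T : ℕ) :
    ∑ t ∈ Finset.Icc 1 T, (Real.sqrt t)⁻¹ ≤ 2 * Real.sqrt T := by
  induction T with
  | zero => simp
  | succ T ih =>
    rw [Finset.sum_Icc_succ_top (by omega)]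
    have hs : (0:ℝ) ≤ Real.sqrt T := Real.sqrt_nonneg _
    have hu : (0:ℝ) < Real.sqrt (T+1) := Real.sqrt_pos.2 (by positivity)
    have hs2 : (Real.sqrt T)^2 = T := Real.sq_sqrt (by positivity)
    have hu2 : (Real.sqrt (T+1))^2 = (T:ℝ)+1 := by
      rw [Real.sq_sqrt (by positivity)]
    have key : (Real.sqrt ((T:ℕ)+1 : ℕ))⁻¹ ≤ 2 * Real.sqrt (T+1) - 2 * Real.sqrt T := by
      push_cast
      rw [inv_le_iff_one_le_mul₀ (by push_cast at hu ⊢; exact hu)]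
      push_cast at hu2 ⊢
      nlinarith [sq_nonneg (Real.sqrt (T+1) - Real.sqrt T)]
    have := add_le_add ih key
    push_cast at this ⊢
    linarith

lemma ftplMeasBadSet (A : ℕ → ℝ) (β : ℝ) (t : ℕ) :
    MeasurableSet {c : ℝ | |A t + β * Real.sqrt t * c| ≤ 1 + β * |c|} := by
  apply measurableSet_le
  · exact ((continuous_const.add (continuous_const.mul continuous_id)).abs).measurable
  · exact (continuous_const.add (continuous_const.mul continuous_abs)).measurable

open scoped Classical in
lemma ftplCnt_cast (A : ℕ → ℝ) (β : ℝ) (T : ℕ) (c : ℝ) :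
    (ftplCnt A β T c : ℝ≥0∞) =
      ∑ t ∈ Finset.Icc 1 T,
        Set.indicator {c : ℝ | |A t + β * Real.sqrt t * c| ≤ 1 + β * |c|} (fun _ => 1) c := by
  rw [ftplCnt, Finset.card_filter, Nat.cast_sum]
  refine Finset.sum_congr rfl fun t _ => ?_
  by_cases h : |A t + β * Real.sqrt t * c| ≤ 1 + β * |c| <;>
    simp [Set.indicator_apply, h]

lemma ftplCnt_meas (A : ℕ → ℝ) (β : ℝ) (T : ℕ) :
    Measurable (fun c => (ftplCnt A β T c : ℝ≥0∞)) := by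
  simp only [ftplCnt_cast]
  exact Finset.measurable_sum _ fun t _ =>
    (measurable_one).indicator (ftplMeasBadSet A β t)

lemma ftplMeasBound (a b M : ℝ) (hb : 0 < b) :
    volume {c : ℝ | |a + b * c| ≤ M} ≤ ENNReal.ofReal (2 * M / b) := by
  have : {c : ℝ | |a + b * c| ≤ M} = Set.Icc ((-M - a)/b) ((M - a)/b) := by
    ext c
    simp only [Set.mem_setOf_eq, Set.mem_Icc, abs_le, div_le_iff₀ hb, le_div_iff₀ hb]
    constructor <;> intro h <;> constructor <;> nlinarith [h.1, h.2]
  rw [this, Real.volume_Icc]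
  apply ENNReal.ofReal_le_ofReal
  rw [div_sub_div_same]
  apply le_of_eq
  field_simp
  ring

lemma ftplCnt_mono (A : ℕ → ℝ) (β : ℝ) {T T' : ℕ} (h : T ≤ T') (c : ℝ) :
    ftplCnt A β T c ≤ ftplCnt A β T' c := by
  classical
  apply Finset.card_le_card
  apply Finset.filter_subset_filter
  exact Finset.Icc_subset_Icc_right h

lemma ftplLintBound (A : ℕ → ℝ) {β : ℝ} (hβ : 0 < β) (K : ℝ) (hK : 0 ≤ K) (T : ℕ) :
    ∫⁻ c, (ftplCnt A β T c : ℝ≥0∞) ∂(volume.restrict (Set.Icc (-K) K)) ≤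
      ENNReal.ofReal ((2 * (1 + β * K) / β) * (2 * Real.sqrt T)) := by
  set μ := volume.restrict (Set.Icc (-K) K) with hμ
  have step1 : ∫⁻ c, (ftplCnt A β T c : ℝ≥0∞) ∂μ =
      ∑ t ∈ Finset.Icc 1 T,
        μ {c : ℝ | |A t + β * Real.sqrt t * c| ≤ 1 + β * |c|} := by
    simp only [ftplCnt_cast]
    rw [lintegral_finset_sum _ fun t _ =>
      Measurable.indicator measurable_const (ftplMeasBadSet A β t)]
    refine Finset.sum_congr rfl fun t _ => ?_
    rw [lintegral_indicator (ftplMeasBadSet A β t)]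
    simp
  rw [step1]
  have step2 : ∀ t ∈ Finset.Icc 1 T,
      μ {c : ℝ | |A t + β * Real.sqrt t * c| ≤ 1 + β * |c|} ≤
        ENNReal.ofReal ((2 * (1 + β * K) / β) * (Real.sqrt t)⁻¹) := by
    intro t ht
    have ht1 : 1 ≤ t := (Finset.mem_Icc.1 ht).1
    have hb : 0 < β * Real.sqrt t :=
      mul_pos hβ (Real.sqrt_pos.2 (by exact_mod_cast Nat.pos_of_ne_zero (by omega)))
    have hsub : {c : ℝ | |A t + β * Real.sqrt t * c| ≤ 1 + β * |c|} ∩ Set.Icc (-K) K ⊆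
        {c : ℝ | |A t + β * Real.sqrt t * c| ≤ 1 + β * K} := by
      rintro c ⟨hc1, hc2⟩
      have : |c| ≤ K := abs_le.2 ⟨hc2.1, hc2.2⟩
      simp only [Set.mem_setOf_eq] at hc1 ⊢
      nlinarith [abs_nonneg c]
    calc μ {c : ℝ | |A t + β * Real.sqrt t * c| ≤ 1 + β * |c|}
        = volume ({c : ℝ | |A t + β * Real.sqrt t * c| ≤ 1 + β * |c|} ∩ Set.Icc (-K) K) := by
          rw [hμ, Measure.restrict_apply (ftplMeasBadSet A β t)]
      _ ≤ volume {c : ℝ | |A t + β * Real.sqrt t * c| ≤ 1 + β * K} :=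
          measure_mono hsub
      _ ≤ ENNReal.ofReal (2 * (1 + β * K) / (β * Real.sqrt t)) :=
          ftplMeasBound _ _ _ hb
      _ = ENNReal.ofReal ((2 * (1 + β * K) / β) * (Real.sqrt t)⁻¹) := by
          congr 1
          field_simp
  calc ∑ t ∈ Finset.Icc 1 T, μ {c : ℝ | |A t + β * Real.sqrt t * c| ≤ 1 + β * |c|}
      ≤ ∑ t ∈ Finset.Icc 1 T, ENNReal.ofReal ((2 * (1 + β * K) / β) * (Real.sqrt t)⁻¹) :=
        Finset.sum_le_sum step2
    _ = ENNReal.ofReal (∑ t ∈ Finset.Icc 1 T, (2 * (1 + β * K) / β) * (Real.sqrt t)⁻¹) := by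
        rw [ENNReal.ofReal_sum_of_nonneg]
        intro t _
        positivity
    _ ≤ ENNReal.ofReal ((2 * (1 + β * K) / β) * (2 * Real.sqrt T)) := by
        apply ENNReal.ofReal_le_ofReal
        rw [← Finset.mul_sum]
        apply mul_le_mul_of_nonneg_left (ftplSum_inv_sqrt_le T)
        positivity

lemma ftplAeRestrict (A : ℕ → ℝ) {β : ℝ} (hβ : 0 < β) (K : ℕ) :
    ∀ᵐ c ∂(volume.restrict (Set.Icc (-(K:ℝ)) K)),
      Tendsto (fun T : ℕ => (ftplCnt A β T c : ℝ) / T) atTop (nhds 0) := by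
  set μ := volume.restrict (Set.Icc (-(K:ℝ)) K) with hμ
  set F : ℝ → ℝ≥0∞ := fun c => ∑' k : ℕ, ((2:ℝ≥0∞)^k)⁻¹ * (ftplCnt A β (2^(k+1)) c) with hF
  have hFmeas : ∀ k : ℕ, Measurable fun c => ((2:ℝ≥0∞)^k)⁻¹ * (ftplCnt A β (2^(k+1)) c : ℝ≥0∞) :=
    fun k => (ftplCnt_meas A β (2^(k+1))).const_mul _
  have h2k : ∀ k : ℕ, ((2:ℝ≥0∞)^k)⁻¹ = ENNReal.ofReal (((2:ℝ)^k)⁻¹) := by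
    intro k
    rw [ENNReal.ofReal_inv_of_pos (by positivity), ENNReal.ofReal_pow (by norm_num)]
    norm_num
  have hFint : ∫⁻ c, F c ∂μ < ⊤ := by
    have : ∫⁻ c, F c ∂μ = ∑' k : ℕ, ∫⁻ c, ((2:ℝ≥0∞)^k)⁻¹ * (ftplCnt A β (2^(k+1)) c) ∂μ := by
      rw [hF]
      exact lintegral_tsum fun k => (hFmeas k).aemeasurable
    rw [this]
    have hs2 : ∀ n : ℕ, Real.sqrt ((2:ℝ)^n) = (Real.sqrt 2)^n := by
      intro n
      induction n with
      | zero => simp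
      | succ n ih => rw [pow_succ, pow_succ, Real.sqrt_mul (by positivity), ih]
    have hinv2 : ∀ n : ℕ, ((2:ℝ)^n)⁻¹ * (Real.sqrt 2)^n = ((Real.sqrt 2)⁻¹)^n := by
      intro n
      rw [← inv_pow, ← mul_pow]
      congr 1
      have h2 : Real.sqrt 2 * Real.sqrt 2 = 2 := Real.mul_self_sqrt (by norm_num)
      have hpos : (0:ℝ) < Real.sqrt 2 := Real.sqrt_pos.2 (by norm_num)
      field_simp
      exact Real.sq_sqrt (by norm_num)
    have hbound : ∀ k : ℕ, ∫⁻ c, ((2:ℝ≥0∞)^k)⁻¹ * (ftplCnt A β (2^(k+1)) c) ∂μ ≤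
        ENNReal.ofReal ((4 * (1 + β * K) / β) * Real.sqrt 2 * ((Real.sqrt 2)⁻¹)^k) := by
      intro k
      rw [lintegral_const_mul _ (ftplCnt_meas A β (2^(k+1)))]
      have hcast : ((2^(k+1) : ℕ) : ℝ) = (2:ℝ)^(k+1) := by push_cast; ring
      calc ((2:ℝ≥0∞)^k)⁻¹ * ∫⁻ c, (ftplCnt A β (2^(k+1)) c : ℝ≥0∞) ∂μ
          ≤ ((2:ℝ≥0∞)^k)⁻¹ *
            ENNReal.ofReal ((2 * (1 + β * K) / β) * (2 * Real.sqrt ((2^(k+1) : ℕ) : ℝ))) :=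
            mul_le_mul_right (ftplLintBound A hβ (K:ℝ) (by positivity) (2^(k+1))) _
        _ = ENNReal.ofReal (((2:ℝ)^k)⁻¹ *
              ((2 * (1 + β * K) / β) * (2 * Real.sqrt ((2^(k+1) : ℕ) : ℝ)))) := by
            rw [h2k k, ← ENNReal.ofReal_mul (by positivity)]
        _ = ENNReal.ofReal ((4 * (1 + β * K) / β) * Real.sqrt 2 * ((Real.sqrt 2)⁻¹)^k) := by
            congr 1
            rw [hcast, hs2 (k+1), pow_succ, ← hinv2 k]
            ring
    have hr1 : (Real.sqrt 2)⁻¹ < 1 := by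
      rw [inv_lt_one_iff₀]
      right
      have : Real.sqrt 1 < Real.sqrt 2 := Real.sqrt_lt_sqrt (by norm_num) (by norm_num)
      simpa using this
    have hr0 : (0:ℝ) ≤ (Real.sqrt 2)⁻¹ := by positivity
    have hsummable : Summable (fun k : ℕ =>
        (4 * (1 + β * (K:ℝ)) / β) * Real.sqrt 2 * ((Real.sqrt 2)⁻¹)^k) :=
      (summable_geometric_of_lt_one hr0 hr1).mul_left _
    calc ∑' k : ℕ, ∫⁻ c, ((2:ℝ≥0∞)^k)⁻¹ * (ftplCnt A β (2^(k+1)) c) ∂μ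
        ≤ ∑' k : ℕ, ENNReal.ofReal
            ((4 * (1 + β * K) / β) * Real.sqrt 2 * ((Real.sqrt 2)⁻¹)^k) :=
          ENNReal.tsum_le_tsum hbound
      _ = ENNReal.ofReal (∑' k : ℕ,
            (4 * (1 + β * K) / β) * Real.sqrt 2 * ((Real.sqrt 2)⁻¹)^k) := by
          rw [ENNReal.ofReal_tsum_of_nonneg (fun k => by positivity) hsummable]
      _ < ⊤ := ENNReal.ofReal_lt_top
  have hFae : ∀ᵐ c ∂μ, F c < ⊤ :=
    ae_lt_top (Measurable.ennreal_tsum hFmeas) hFint.ne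
  filter_upwards [hFae] with c hc
  have hterm : Tendsto (fun k : ℕ => ((2:ℝ≥0∞)^k)⁻¹ * (ftplCnt A β (2^(k+1)) c : ℝ≥0∞))
      atTop (nhds 0) :=
    ENNReal.tendsto_atTop_zero_of_tsum_ne_top hc.ne
  set a : ℕ → ℝ := fun k => (ftplCnt A β (2^(k+1)) c : ℝ) / 2^k with ha
  have hterm_eq : ∀ k : ℕ, ((2:ℝ≥0∞)^k)⁻¹ * (ftplCnt A β (2^(k+1)) c : ℝ≥0∞) =
      ENNReal.ofReal (a k) := by
    intro k
    rw [h2k k, ← ENNReal.ofReal_natCast (ftplCnt A β (2^(k+1)) c),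
      ← ENNReal.ofReal_mul (by positivity)]
    congr 1
    rw [ha]
    ring
  have hatend : Tendsto a atTop (nhds 0) := by
    have h1 : Tendsto (fun k : ℕ => (ENNReal.ofReal (a k)).toReal) atTop (nhds 0) := by
      have := (ENNReal.tendsto_toReal (by norm_num : (0:ℝ≥0∞) ≠ ⊤)).comp
        (by simpa only [hterm_eq] using hterm)
      simpa [Function.comp_def] using this
    have : ∀ k, (ENNReal.ofReal (a k)).toReal = a k := fun k =>
      ENNReal.toReal_ofReal (by positivity)
    simpa only [this] using h1
  have hlog : Tendsto (fun T : ℕ => Nat.log 2 T) atTop atTop := by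
    rw [tendsto_atTop_atTop]
    intro b
    refine ⟨2^b, fun n hn => ?_⟩
    have hn0 : n ≠ 0 := by
      have := Nat.one_le_two_pow (n := b)
      omega
    exact (Nat.le_log_iff_pow_le one_lt_two hn0).2 hn
  apply squeeze_zero' (Eventually.of_forall fun T => by positivity)
    ?_ (hatend.comp hlog)
  rw [eventually_atTop]
  refine ⟨1, fun T hT => ?_⟩
  have hk := Nat.log 2 T
  have hup : (ftplCnt A β T c : ℝ) ≤ (ftplCnt A β (2^(Nat.log 2 T + 1)) c : ℝ) := by
    exact_mod_cast ftplCnt_mono A β (Nat.lt_pow_succ_log_self (by norm_num) T).le c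
  have hdown : ((2:ℝ)^(Nat.log 2 T)) ≤ T := by
    exact_mod_cast Nat.pow_log_le_self 2 (by omega)
  exact div_le_div₀ (by positivity) hup (by positivity) hdown

lemma ftplAeGlobal (A : ℕ → ℝ) {β : ℝ} (hβ : 0 < β) :
    ∀ᵐ c ∂(volume : Measure ℝ),
      Tendsto (fun T : ℕ => (ftplCnt A β T c : ℝ) / T) atTop (nhds 0) := by
  set bad : Set ℝ := {c | ¬ Tendsto (fun T : ℕ => (ftplCnt A β T c : ℝ) / T) atTop (nhds 0)}
    with hbad
  rw [ae_iff]
  have hsub : bad ⊆ ⋃ K : ℕ, bad ∩ Set.Icc (-(K:ℝ)) K := by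
    intro c hc
    refine Set.mem_iUnion.2 ⟨⌈|c|⌉₊, hc, ?_⟩
    have : |c| ≤ (⌈|c|⌉₊ : ℝ) := Nat.le_ceil _
    exact Set.mem_Icc.2 (abs_le.1 this)
  refine measure_mono_null hsub (measure_iUnion_null fun K => ?_)
  have h1 : volume.restrict (Set.Icc (-(K:ℝ)) K) bad = 0 := ftplAeRestrict A hβ K
  rw [Measure.restrict_apply' measurableSet_Icc] at h1
  exact h1

lemma ftplProbNull {Ω : Type*} [MeasureSpace Ω] [IsProbabilityMeasure (ℙ : Measure Ω)]
    (gi gj : Ω → ℝ) (hind : IndepFun gi gj ℙ)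
    (hgi : Measure.map gi ℙ = gaussianReal 0 1) (hgj : Measure.map gj ℙ = gaussianReal 0 1)
    {B : Set ℝ} (hB : MeasurableSet B) (hB0 : volume B = 0) :
    ∀ᵐ ω ∂(ℙ : Measure Ω), gi ω - gj ω ∉ B := by
  have hmi : AEMeasurable gi ℙ := aemeasurable_of_map_neZero (by rw [hgi]; infer_instance)
  have hmj : AEMeasurable gj ℙ := aemeasurable_of_map_neZero (by rw [hgj]; infer_instance)
  have hprod : Measure.map (fun ω => (gi ω, gj ω)) ℙ =
      (gaussianReal 0 1).prod (gaussianReal 0 1) := by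
    rw [(indepFun_iff_map_prod_eq_prod_map_map hmi hmj).1 hind, hgi, hgj]
  have hsB : MeasurableSet {p : ℝ × ℝ | p.1 - p.2 ∈ B} :=
    (measurable_fst.sub measurable_snd) hB
  have key : ℙ {ω | gi ω - gj ω ∈ B} = 0 := by
    have : {ω | gi ω - gj ω ∈ B} = (fun ω => (gi ω, gj ω)) ⁻¹' {p : ℝ × ℝ | p.1 - p.2 ∈ B} :=
      rfl
    rw [this, ← Measure.map_apply_of_aemeasurable (hmi.prodMk hmj) hsB, hprod,
      Measure.prod_apply hsB]
    have hzero : ∀ x : ℝ, (gaussianReal 0 1) (Prod.mk x ⁻¹' {p : ℝ × ℝ | p.1 - p.2 ∈ B}) = 0 := by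
      intro x
      have hpre : Prod.mk x ⁻¹' {p : ℝ × ℝ | p.1 - p.2 ∈ B} = (fun y => x - y) ⁻¹' B := rfl
      have hvol : volume ((fun y : ℝ => x - y) ⁻¹' B) = 0 := by
        rw [(Measure.measurePreserving_sub_left volume x).measure_preimage hB.nullMeasurableSet]
        exact hB0
      have hac : (gaussianReal 0 1) ≪ (volume : Measure ℝ) := by
        rw [gaussianReal_of_var_ne_zero 0 (one_ne_zero)]
        exact withDensity_absolutelyContinuous _ _
      rw [hpre]
      exact hac hvol
    simp only [hzero]
    simp
  rw [ae_iff]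
  simpa using key

end FTPLAux



open scoped Classical in
lemma ftplCard_flip_le (A : ℕ → ℝ) (β : ℝ) (c : ℝ) (T : ℕ) (P : ℕ → Prop)
    (h : ∀ τ, 2 ≤ τ → P τ → |A (τ-1) + β * Real.sqrt ((τ-1 : ℕ) : ℝ) * c| ≤ 1 + β * |c|) :
    ((Finset.Icc 2 T).filter P).card ≤ ftplCnt A β T c := by
  rw [ftplCnt]
  apply Finset.card_le_card_of_injOn (fun τ => τ - 1)
  · intro τ hτ
    simp only [Finset.mem_coe, Finset.mem_filter] at hτ ⊢
    obtain ⟨hτ1, hτ2⟩ := hτ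
    rw [Finset.mem_Icc] at hτ1 ⊢
    exact ⟨⟨by omega, by omega⟩, h τ hτ1.1 hτ2⟩
  · intro τ hτ τ' hτ' hee
    simp only [Finset.coe_filter, Finset.mem_Icc, Set.mem_setOf_eq] at hτ hτ'
    have : τ - 1 = τ' - 1 := hee
    omega

/-- Under the anytime FTPL caching policy with learning rates
`η_t = α·sqrt t` (`α > 0`), the fetch rate `FR_t = (1/t)·Σ_{τ=2}^t ‖y_τ − y_{τ−1}‖_1`
satisfies `limsup_{t→∞} FR_t = 0` almost surely. -/
theorem ftpl_anytime_fetch_rate_vanishes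
    {Ω : Type*} [MeasureSpace Ω] [IsProbabilityMeasure (ℙ : Measure Ω)]
    (N C : ℕ) (hC : 0 < C) (hCN : C < N) (hNC : C ≤ N - 2)
    (f : ℕ → Fin N)
    (X : ℕ → Fin N → ℝ)
    (hX : ∀ t i, X t i = ∑ τ ∈ Finset.Ico 1 t, if f τ = i then (1 : ℝ) else 0)
    (γ : Fin N → Ω → ℝ)
    (hγindep : iIndepFun γ ℙ)
    (hγgauss : ∀ i, Measure.map (γ i) ℙ = gaussianReal 0 1)
    (α : ℝ) (hα : 0 < α)
    (S : ℕ → Ω → Finset (Fin N))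
    (hScard : ∀ t ω, (S t ω).card = C)
    (hStop : ∀ t ω, ∀ i ∈ S t ω, ∀ j ∉ S t ω,
      X t j + α * Real.sqrt t * γ j ω ≤ X t i + α * Real.sqrt t * γ i ω) :
    ∀ᵐ ω ∂(ℙ : Measure Ω),
      Filter.limsup
        (fun t : ℕ =>
          (1 / (t : ℝ)) * ∑ τ ∈ Finset.Icc 2 t, ((symmDiff (S τ ω) (S (τ - 1) ω)).card : ℝ))
        Filter.atTop = 0 := by
  classical
  set A : Fin N → Fin N → ℕ → ℝ := fun i j t => X t i - X t j with hA
  -- almost sure event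
  have hae : ∀ᵐ ω ∂(ℙ : Measure Ω), ∀ i j : Fin N, i ≠ j →
      Tendsto (fun T : ℕ => (ftplCnt (A i j) α T (γ i ω - γ j ω) : ℝ) / T) atTop (nhds 0) := by
    rw [ae_all_iff]
    intro i
    rw [ae_all_iff]
    intro j
    by_cases hij : i = j
    · filter_upwards with ω h
      exact absurd hij h
    · have hnull : (volume : Measure ℝ) {c : ℝ |
          ¬ Tendsto (fun T : ℕ => (ftplCnt (A i j) α T c : ℝ) / T) atTop (nhds 0)} = 0 := by
        have := ftplAeGlobal (A i j) hα
        rwa [ae_iff] at this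
      obtain ⟨B, hDB, hBmeas, hB0⟩ := exists_measurable_superset_of_null hnull
      have := ftplProbNull (γ i) (γ j) (hγindep.indepFun hij)
        (hγgauss i) (hγgauss j) hBmeas hB0
      filter_upwards [this] with ω hω _
      by_contra hcon
      exact hω (hDB hcon)
  filter_upwards [hae] with ω hω
  -- pointwise argument
  set c : Fin N → Fin N → ℝ := fun i j => γ i ω - γ j ω with hc
  set flip : Fin N → Fin N → ℕ → Prop := fun i j τ =>
    i ∈ S τ ω ∧ i ∉ S (τ-1) ω ∧ j ∈ S (τ-1) ω ∧ j ∉ S τ ω with hflip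
  -- flip implies "bad"
  have key1 : ∀ i j : Fin N, ∀ τ, 2 ≤ τ → flip i j τ →
      |A i j (τ-1) + α * Real.sqrt ((τ-1 : ℕ) : ℝ) * c i j| ≤ 1 + α * |c i j| := by
    intro i j τ hτ2 hfl
    obtain ⟨hi1, hi0, hj0, hj1⟩ := hfl
    set t := τ - 1 with ht
    have hτt : τ = t + 1 := by omega
    have ht1 : 1 ≤ t := by omega
    have hD1 : X t i + α * Real.sqrt t * γ i ω ≤ X t j + α * Real.sqrt t * γ j ω :=
      hStop t ω j hj0 i hi0
    have hD2 : X τ j + α * Real.sqrt τ * γ j ω ≤ X τ i + α * Real.sqrt τ * γ i ω :=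
      hStop τ ω i hi1 j hj1
    have hstep : ∀ k : Fin N, X τ k = X t k + (if f t = k then (1:ℝ) else 0) := by
      intro k
      rw [hX, hX, hτt, Finset.sum_Ico_succ_top (by omega)]
    have hAd : |A i j τ - A i j t| ≤ 1 := by
      rw [hA]
      simp only
      rw [hstep i, hstep j]
      split_ifs <;> norm_num
    have hsq0 : Real.sqrt t ≤ Real.sqrt τ := by
      apply Real.sqrt_le_sqrt
      exact_mod_cast by omega
    have hsq1 : Real.sqrt τ - Real.sqrt t ≤ 1 := by
      have h1 : (Real.sqrt τ)^2 = (τ:ℝ) := Real.sq_sqrt (by positivity)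
      have h2 : (Real.sqrt t)^2 = (t:ℝ) := Real.sq_sqrt (by positivity)
      have h3 : (0:ℝ) ≤ Real.sqrt t := Real.sqrt_nonneg _
      have h4 : (1:ℝ) ≤ (t:ℝ) := by exact_mod_cast ht1
      have h5 : (τ:ℝ) = (t:ℝ) + 1 := by rw [hτt]; push_cast; ring
      nlinarith [Real.sqrt_nonneg (τ:ℝ)]
    -- D_t ≤ 0 ≤ D_τ
    have hDt : A i j t + α * Real.sqrt t * c i j ≤ 0 := by
      rw [hA, hc]; simp only; nlinarith [hD1]
    have hDτ : 0 ≤ A i j τ + α * Real.sqrt τ * c i j := by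
      rw [hA, hc]; simp only; nlinarith [hD2]
    have hcabs1 : c i j ≤ |c i j| := le_abs_self _
    have hcabs2 : 0 ≤ |c i j| := abs_nonneg _
    have hdiff : (A i j τ + α * Real.sqrt τ * c i j) - (A i j t + α * Real.sqrt t * c i j)
        ≤ 1 + α * |c i j| := by
      have h1 : A i j τ - A i j t ≤ 1 := (abs_le.1 hAd).2
      have h2 : (Real.sqrt τ - Real.sqrt t) * c i j ≤ |c i j| := by
        calc (Real.sqrt τ - Real.sqrt t) * c i j
            ≤ (Real.sqrt τ - Real.sqrt t) * |c i j| :=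
              mul_le_mul_of_nonneg_left hcabs1 (by linarith)
          _ ≤ 1 * |c i j| := mul_le_mul_of_nonneg_right hsq1 hcabs2
          _ = |c i j| := one_mul _
      nlinarith [mul_le_mul_of_nonneg_left h2 hα.le]
    rw [abs_le]
    constructor
    · linarith
    · nlinarith
  -- per-step symmDiff bound
  have key2 : ∀ τ : ℕ,
      ((symmDiff (S τ ω) (S (τ-1) ω)).card : ℝ) ≤
        (2*C : ℝ) * ∑ p ∈ (Finset.univ : Finset (Fin N)).offDiag,
          (if flip p.1 p.2 τ then (1:ℝ) else 0) := by
    intro τ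
    by_cases h : S τ ω = S (τ-1) ω
    · have hsd : symmDiff (S τ ω) (S (τ-1) ω) = ⊥ := by rw [h]; exact symmDiff_self _
      rw [hsd]
      simp only [Finset.bot_eq_empty, Finset.card_empty, Nat.cast_zero]
      apply mul_nonneg (by positivity)
      apply Finset.sum_nonneg
      intro p _
      positivity
    · have hne1 : ¬ S τ ω ⊆ S (τ-1) ω := by
        intro hsub
        exact h (Finset.eq_of_subset_of_card_le hsub (by rw [hScard, hScard]))
      have hne2 : ¬ S (τ-1) ω ⊆ S τ ω := by
        intro hsub
        exact h (Finset.eq_of_subset_of_card_le hsub (by rw [hScard, hScard])).symm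
      obtain ⟨i, hiτ, hi1⟩ := Finset.not_subset.1 hne1
      obtain ⟨j, hj1, hjτ⟩ := Finset.not_subset.1 hne2
      have hij : i ≠ j := fun he => hi1 (he ▸ hj1)
      have hmem : (i, j) ∈ (Finset.univ : Finset (Fin N)).offDiag :=
        Finset.mem_offDiag.2 ⟨Finset.mem_univ _, Finset.mem_univ _, hij⟩
      have hone : (1:ℝ) ≤ ∑ p ∈ (Finset.univ : Finset (Fin N)).offDiag,
          (if flip p.1 p.2 τ then (1:ℝ) else 0) := by
        have := Finset.single_le_sum
          (f := fun p : Fin N × Fin N => if flip p.1 p.2 τ then (1:ℝ) else 0)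
          (fun p _ => by positivity) hmem
        simpa [if_pos (show flip i j τ from ⟨hiτ, hi1, hj1, hjτ⟩)] using this
      have hcard : ((symmDiff (S τ ω) (S (τ-1) ω)).card : ℝ) ≤ 2*C := by
        have h1 : (symmDiff (S τ ω) (S (τ-1) ω)).card ≤ (S τ ω ∪ S (τ-1) ω).card :=
          Finset.card_le_card symmDiff_le_sup
        have h2 : (S τ ω ∪ S (τ-1) ω).card ≤ C + C := by
          calc (S τ ω ∪ S (τ-1) ω).card ≤ (S τ ω).card + (S (τ-1) ω).card :=
            Finset.card_union_le _ _
          _ = C + C := by rw [hScard, hScard]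
        have := h1.trans h2
        push_cast
        exact_mod_cast by omega
      calc ((symmDiff (S τ ω) (S (τ-1) ω)).card : ℝ) ≤ 2*C := hcard
        _ = (2*C : ℝ) * 1 := by ring
        _ ≤ _ := mul_le_mul_of_nonneg_left hone (by positivity)
  -- the comparison sequence
  set g : ℕ → ℝ := fun T => (2*C : ℝ) * ∑ p ∈ (Finset.univ : Finset (Fin N)).offDiag,
    (ftplCnt (A p.1 p.2) α T (c p.1 p.2) : ℝ) / T with hg
  have htg : Tendsto g atTop (nhds 0) := by
    have hsum : Tendsto (fun T : ℕ => ∑ p ∈ (Finset.univ : Finset (Fin N)).offDiag,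
        (ftplCnt (A p.1 p.2) α T (c p.1 p.2) : ℝ) / T) atTop
        (nhds (∑ p ∈ (Finset.univ : Finset (Fin N)).offDiag, (0:ℝ))) := by
      apply tendsto_finset_sum
      intro p hp
      exact hω p.1 p.2 (Finset.mem_offDiag.1 hp).2.2
    simpa using hsum.const_mul (2*C : ℝ)
  have hle : ∀ T : ℕ,
      (1 / (T:ℝ)) * ∑ τ ∈ Finset.Icc 2 T, ((symmDiff (S τ ω) (S (τ-1) ω)).card : ℝ) ≤ g T := by
    intro T
    have hsum1 : ∑ τ ∈ Finset.Icc 2 T, ((symmDiff (S τ ω) (S (τ-1) ω)).card : ℝ) ≤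
        (2*C : ℝ) * ∑ p ∈ (Finset.univ : Finset (Fin N)).offDiag,
          ((ftplCnt (A p.1 p.2) α T (c p.1 p.2) : ℝ)) := by
      calc ∑ τ ∈ Finset.Icc 2 T, ((symmDiff (S τ ω) (S (τ-1) ω)).card : ℝ)
          ≤ ∑ τ ∈ Finset.Icc 2 T, (2*C : ℝ) *
              ∑ p ∈ (Finset.univ : Finset (Fin N)).offDiag,
                (if flip p.1 p.2 τ then (1:ℝ) else 0) :=
            Finset.sum_le_sum fun τ _ => key2 τ
        _ = (2*C : ℝ) * ∑ p ∈ (Finset.univ : Finset (Fin N)).offDiag,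
              ∑ τ ∈ Finset.Icc 2 T, (if flip p.1 p.2 τ then (1:ℝ) else 0) := by
            rw [← Finset.mul_sum, Finset.sum_comm]
        _ ≤ (2*C : ℝ) * ∑ p ∈ (Finset.univ : Finset (Fin N)).offDiag,
              ((ftplCnt (A p.1 p.2) α T (c p.1 p.2) : ℝ)) := by
            apply mul_le_mul_of_nonneg_left ?_ (by positivity)
            apply Finset.sum_le_sum
            intro p _
            have hcardle := ftplCard_flip_le (A p.1 p.2) α (c p.1 p.2) T (flip p.1 p.2)
              (fun τ h2 hf => key1 p.1 p.2 τ h2 hf)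
            rw [Finset.sum_boole]
            have hinst : (@Finset.filter ℕ (fun x => flip p.1 p.2 x)
                  (fun a => instDecidableAnd) (Finset.Icc 2 T)).card =
                (@Finset.filter ℕ (flip p.1 p.2)
                  (fun a => Classical.propDecidable (flip p.1 p.2 a)) (Finset.Icc 2 T)).card := by
              congr!
            rw [hinst]
            exact_mod_cast hcardle
    calc (1 / (T:ℝ)) * ∑ τ ∈ Finset.Icc 2 T, ((symmDiff (S τ ω) (S (τ-1) ω)).card : ℝ)
        ≤ (1 / (T:ℝ)) * ((2*C : ℝ) * ∑ p ∈ (Finset.univ : Finset (Fin N)).offDiag,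
            ((ftplCnt (A p.1 p.2) α T (c p.1 p.2) : ℝ))) :=
          mul_le_mul_of_nonneg_left hsum1 (by positivity)
      _ = g T := by
          simp only [hg]
          rw [← Finset.sum_div]
          ring
  have h0 : ∀ T : ℕ, 0 ≤ (1 / (T:ℝ)) *
      ∑ τ ∈ Finset.Icc 2 T, ((symmDiff (S τ ω) (S (τ-1) ω)).card : ℝ) := by
    intro T
    apply mul_nonneg (by positivity)
    apply Finset.sum_nonneg
    intro τ _
    positivity
  exact (squeeze_zero h0 hle htg).limsup_eq
end

section
/- Under the anytime FTPL caching policy with learning rates η_t = α·sqrt(t) (α > 0), the currently requested file is never evicted: for every slot t, P(f_t ∈ S_t and f_t ∉ S_{t+1}) = 0. -/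
open MeasureTheory ProbabilityTheory Real

/-- Under the anytime FTPL caching policy with learning rates
`η_t = α·sqrt t` (`α > 0`), the currently requested file is never evicted:
for every slot `t`, `P(f_t ∈ S_t and f_t ∉ S_{t+1}) = 0`. -/
theorem ftpl_anytime_requested_file_never_evicted
    {Ω : Type*} [MeasureSpace Ω] [IsProbabilityMeasure (ℙ : Measure Ω)]
    (N C : ℕ) (hC : 0 < C) (hCN : C < N)
    (f : ℕ → Fin N)
    (X : ℕ → Fin N → ℝ)
    (hX : ∀ t i, X t i = ∑ τ ∈ Finset.Ico 1 t, if f τ = i then (1 : ℝ) else 0)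
    (γ : Fin N → Ω → ℝ)
    (hγindep : iIndepFun γ ℙ)
    (hγgauss : ∀ i, Measure.map (γ i) ℙ = gaussianReal 0 1)
    (α : ℝ) (hα : 0 < α)
    (S : ℕ → Ω → Finset (Fin N))
    (hScard : ∀ t ω, (S t ω).card = C)
    (hStop : ∀ t ω, ∀ i ∈ S t ω, ∀ j ∉ S t ω,
      X t j + α * Real.sqrt t * γ j ω ≤ X t i + α * Real.sqrt t * γ i ω)
    (t : ℕ) (ht : 1 ≤ t) :
    ℙ {ω | f t ∈ S t ω ∧ f t ∉ S (t + 1) ω} = 0 := by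
  have hset : {ω | f t ∈ S t ω ∧ f t ∉ S (t + 1) ω} = (∅ : Set Ω) := by
    ext ω
    simp only [Set.mem_setOf_eq, Set.mem_empty_iff_false, iff_false, not_and, not_not]
    intro hin
    by_contra hout
    obtain ⟨j, hjS, hjnot⟩ : ∃ j ∈ S (t + 1) ω, j ∉ S t ω := by
      by_contra h
      push_neg at h
      have hsub : S (t + 1) ω ⊆ S t ω := h
      have heq := Finset.eq_of_subset_of_card_le hsub
        (by rw [hScard, hScard])
      rw [← heq] at hin
      exact hout hin
    have hji : j ≠ f t := fun h => hout (h ▸ hjS)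
    have h1 := hStop t ω (f t) hin j hjnot
    have h2 := hStop (t + 1) ω j hjS (f t) hout
    -- count computations
    have hXi1 : X (t + 1) (f t) = X t (f t) + 1 := by
      rw [hX, hX, Finset.sum_Ico_succ_top ht, if_pos rfl]
    have hXj1 : X (t + 1) j = X t j := by
      rw [hX, hX, Finset.sum_Ico_succ_top ht, if_neg (fun h => hji h.symm), add_zero]
    have hXib : X t (f t) ≤ (t : ℝ) - 1 := by
      rw [hX]
      calc ∑ τ ∈ Finset.Ico 1 t, (if f τ = f t then (1 : ℝ) else 0)
          ≤ ∑ τ ∈ Finset.Ico 1 t, (1 : ℝ) :=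
            Finset.sum_le_sum (fun τ _ => by split <;> norm_num)
        _ = (t : ℝ) - 1 := by
            rw [Finset.sum_const, Nat.card_Ico, nsmul_eq_mul, mul_one, Nat.cast_sub ht]
            push_cast
            ring
    have hXjb : 0 ≤ X t j := by
      rw [hX]
      exact Finset.sum_nonneg (fun τ _ => by split <;> norm_num)
    rw [hXi1, hXj1] at h2
    -- square root facts
    have ht1 : (1 : ℝ) ≤ (t : ℝ) := by exact_mod_cast ht
    have hs : Real.sqrt t ^ 2 = (t : ℝ) := Real.sq_sqrt (by linarith)
    have hs' : Real.sqrt (t + 1) ^ 2 = (t : ℝ) + 1 := by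
      rw [← Nat.cast_add_one, Real.sq_sqrt (by positivity)]

    have hsp : (1 : ℝ) ≤ Real.sqrt t := by
      rw [show (1 : ℝ) = Real.sqrt 1 from (Real.sqrt_one).symm]
      exact Real.sqrt_le_sqrt ht1
    have hss : Real.sqrt t < Real.sqrt (t + 1) := by
      rw [← Nat.cast_add_one]
      exact Real.sqrt_lt_sqrt (by positivity) (by exact_mod_cast Nat.lt_succ_self t)
    push_cast at h2
    set s := Real.sqrt t
    set s' := Real.sqrt (t + 1)
    set g := γ j ω - γ (f t) ω with hg
    -- h1 : X t j + α*s*γ j ≤ X t (f t) + α*s*γ (f t)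
    -- h2 : X t (f t) + 1 + α*s'*γ (f t) ≤ X t j + α*s'*γ j
    have hA : α * s * g ≤ X t (f t) - X t j := by rw [hg]; ring_nf; ring_nf at h1; linarith
    have hB : X t (f t) - X t j + 1 ≤ α * s' * g := by
      rw [hg]; ring_nf; ring_nf at h2; linarith
    have hgpos : 0 < α * g := by nlinarith
    nlinarith [mul_pos hgpos (sub_pos.2 hss), mul_le_mul_of_nonneg_left hss.le hgpos.le,
      sq_nonneg (s' - s), sq_nonneg (s' + s), mul_pos hα (sub_pos.2 hss),
      mul_le_mul_of_nonneg_right hsp (le_of_lt hgpos)]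
  rw [hset]
  exact measure_empty
end

section
/- Under the anytime FTPL caching policy with learning rates η_t = α·sqrt(t) (α > 0), the probability that the currently requested file f_t is fetched into the cache at slot t+1 satisfies P(f_t ∉ S_t and f_t ∈ S_{t+1}) ≤ 3/(2·α·sqrt(2π)·sqrt(t+1)). -/
open MeasureTheory ProbabilityTheory Real

section CthTop
variable {κ : Type*} [Fintype κ]

noncomputable def cthTop (C : ℕ) (v : κ → ℝ) : ℝ :=
  sSup ((fun T : Finset κ => sInf (v '' ↑T)) '' {T : Finset κ | T.card = C})

lemma le_cthTop {C : ℕ} (hC : 0 < C) {v : κ → ℝ} {T : Finset κ} (hT : T.card = C)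
    {b : ℝ} (hb : ∀ j ∈ T, b ≤ v j) : b ≤ cthTop C v := by
  have hTne : T.Nonempty := Finset.card_pos.mp (hT ▸ hC)
  have h1 : b ≤ sInf (v '' ↑T) := by
    apply le_csInf (hTne.to_set.image v)
    rintro x ⟨j, hj, rfl⟩
    exact hb j hj
  refine h1.trans (le_csSup ?_ ⟨T, hT, rfl⟩)
  exact ((Set.toFinite {T : Finset κ | T.card = C}).image _).bddAbove

lemma cthTop_exists (C : ℕ) (v : κ → ℝ) (hC : 0 < C) (hcard : C ≤ Fintype.card κ) :
    ∃ T : Finset κ, T.card = C ∧ T.Nonempty ∧ cthTop C v = sInf (v '' ↑T) := by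
  obtain ⟨T, -, hTcard⟩ := Finset.exists_subset_card_eq
    (by simpa using hcard : C ≤ (Finset.univ : Finset κ).card)
  have hne : ((fun T : Finset κ => sInf (v '' ↑T)) '' {T : Finset κ | T.card = C}).Nonempty :=
    ⟨_, ⟨T, hTcard, rfl⟩⟩
  have hfin := (Set.toFinite {T : Finset κ | T.card = C}).image
    (fun T : Finset κ => sInf (v '' ↑T))
  obtain ⟨T', hT', hval⟩ := hne.csSup_mem hfin
  exact ⟨T', hT', Finset.card_pos.mp (hT' ▸ hC), hval.symm⟩

lemma measurable_cthTop {δ : Type*} [MeasurableSpace δ] {C : ℕ} (hC : 0 < C)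
    (hcard : C ≤ Fintype.card κ) (g : κ → δ → ℝ) (hg : ∀ j, Measurable (g j)) :
    Measurable (fun x => cthTop C (fun j => g j x)) := by
  classical
  set P : Finset (Finset κ) := Finset.univ.powersetCard C with hP
  have hPne : P.Nonempty := Finset.powersetCard_nonempty.2 (by simpa using hcard)
  have hTne : ∀ T ∈ P, T.Nonempty := fun T hT =>
    Finset.card_pos.1 (by rw [(Finset.mem_powersetCard_univ).1 hT]; exact hC)
  have hset : (↑P : Set (Finset κ)) = {T : Finset κ | T.card = C} := by
    ext T; simp [hP, Finset.mem_powersetCard_univ]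
  have hrw : ∀ v : κ → ℝ, cthTop C v = P.sup' hPne (fun T => sInf (v '' ↑T)) := by
    intro v
    rw [Finset.sup'_eq_csSup_image, hset]
    rfl
  simp_rw [hrw]
  have hmeas : ∀ T ∈ P, Measurable (fun x => sInf ((fun j => g j x) '' ↑T)) := by
    intro T hT
    have h2 : ∀ x, sInf ((fun j => g j x) '' ↑T) = T.inf' (hTne T hT) (fun j => g j x) :=
      fun x => (Finset.inf'_eq_csInf_image T (hTne T hT) _).symm
    simp_rw [h2]
    have h3 : Measurable (T.inf' (hTne T hT) (fun j (x : δ) => g j x)) :=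
      Finset.inf'_induction (hTne T hT) _ (fun _f hf _g hg => hf.inf hg) (fun j _ => hg j)
    convert h3 using 1
    funext x
    rw [Finset.inf'_apply]
  have h4 := Finset.measurable_sup' hPne (f := fun T (x : δ) => sInf ((fun j => g j x) '' ↑T))
    hmeas
  convert h4 using 1
  funext x
  rw [Finset.sup'_apply]

/-- Key deterministic interval-length bound. -/
lemma ftpl_len_bound {C : ℕ} (hC : 0 < C) (hcard : C ≤ Fintype.card κ)
    (Y : κ → ℝ) (Yk tR : ℝ) (hYk0 : 0 ≤ Yk)
    (hYle : ∀ j, Y j ≤ tR - 1) (htR : 1 ≤ tR)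
    (α s s' : ℝ) (hα : 0 < α) (hspos : 0 < s) (hs'pos : 0 < s')
    (hss' : s ≤ s') (hs2 : s ^ 2 = tR) (hs'2 : s' ^ 2 = tR + 1) (w : κ → ℝ) :
    (cthTop C (fun j => Y j + (α * s) * w j) - Yk) / (α * s)
      - (cthTop C (fun j => Y j + (α * s') * w j) - Yk - 1) / (α * s')
      ≤ 3 / (2 * α * s') := by
  set A : ℝ := cthTop C (fun j => Y j + (α * s) * w j) with hAd
  set A' : ℝ := cthTop C (fun j => Y j + (α * s') * w j) with hA'd
  obtain ⟨T, hTcard, hTne, hTeq⟩ :=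
    cthTop_exists C (fun j => Y j + (α * s) * w j) hC hcard
  have hAA' : (s' / s) * A - ((s' - s) / s) * (tR - 1) ≤ A' := by
    apply le_cthTop hC hTcard
    intro j hj
    have e1 : A ≤ Y j + (α * s) * w j := by
      rw [hAd, hTeq]
      exact csInf_le ((T.finite_toSet.image _).bddBelow) ⟨j, Finset.mem_coe.2 hj, rfl⟩
    have e2 : (s' / s) * (Y j + (α * s) * w j) = (s' / s) * Y j + (α * s') * w j := by
      field_simp
    have e3 : (s' / s) * A ≤ (s' / s) * Y j + (α * s') * w j := by
      rw [← e2]; exact mul_le_mul_of_nonneg_left e1 (by positivity)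
    have e4 : ((s' - s) / s) * Y j ≤ ((s' - s) / s) * (tR - 1) :=
      mul_le_mul_of_nonneg_left (hYle j) (div_nonneg (by linarith) hspos.le)
    have e5 : (s' / s) * Y j = Y j + ((s' - s) / s) * Y j := by
      field_simp
      ring
    linarith [e3, e4, e5]
  have e6 : s' * A - (s' - s) * (tR - 1) ≤ s * A' := by
    have h7 := mul_le_mul_of_nonneg_left hAA' hspos.le
    have h8 : s * ((s' / s) * A - ((s' - s) / s) * (tR - 1))
        = s' * A - (s' - s) * (tR - 1) := by field_simp
    linarith [h7, h8.le, h8.ge]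
  have step2 : (s' - s) * (tR - 1) ≤ s / 2 := by
    have hq : (s' - s) * (s' + s) = 1 := by nlinarith [hs2, hs'2]
    nlinarith [hq, hs2, hspos, hs'pos, hss', sq_nonneg (s' - s)]
  have e7 : 0 ≤ Yk * (s' - s) := mul_nonneg hYk0 (by linarith)
  have step1 : (A - Yk) * s' - (A' - Yk - 1) * s ≤ (3 / 2) * s := by
    nlinarith [e6, e7, step2]
  have hfin1 : (A - Yk) / (α * s) - (A' - Yk - 1) / (α * s')
      = ((A - Yk) * s' - (A' - Yk - 1) * s) / (α * s * s') := by
    field_simp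
  have hfin2 : 3 / (2 * α * s') = ((3 / 2) * s) / (α * s * s') := by
    field_simp
  rw [hfin1, hfin2]
  exact div_le_div_of_nonneg_right step1 (by positivity) |>.trans_eq rfl

end CthTop

lemma gauss_Icc_le (a b : ℝ) :
    gaussianReal 0 1 (Set.Icc a b) ≤ ENNReal.ofReal ((b - a) * (Real.sqrt (2 * Real.pi))⁻¹) := by
  rcases lt_or_ge b a with h | h
  · rw [Set.Icc_eq_empty (not_le.mpr h), measure_empty]
    exact zero_le
  rw [gaussianReal_apply 0 (by norm_num : (1 : NNReal) ≠ 0)]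
  have hbound : ∀ x : ℝ, gaussianPDF 0 1 x ≤ ENNReal.ofReal ((Real.sqrt (2 * Real.pi))⁻¹) := by
    intro x
    apply ENNReal.ofReal_le_ofReal
    rw [gaussianPDFReal]
    push_cast
    have h1 : Real.sqrt (2 * Real.pi * 1) = Real.sqrt (2 * Real.pi) := by rw [mul_one]
    rw [h1]
    have h2 : Real.exp (-(x - 0) ^ 2 / (2 * 1)) ≤ 1 := by
      apply Real.exp_le_one_iff.2
      have : (0:ℝ) ≤ (x - 0) ^ 2 := sq_nonneg _
      nlinarith
    have h3 : (0:ℝ) ≤ (Real.sqrt (2 * Real.pi))⁻¹ := by positivity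
    nlinarith [Real.exp_pos (-(x - 0) ^ 2 / (2 * 1))]
  calc ∫⁻ x in Set.Icc a b, gaussianPDF 0 1 x
      ≤ ∫⁻ _x in Set.Icc a b, ENNReal.ofReal ((Real.sqrt (2 * Real.pi))⁻¹) :=
        lintegral_mono fun x => hbound x
    _ = ENNReal.ofReal ((Real.sqrt (2 * Real.pi))⁻¹) * volume (Set.Icc a b) := by
        rw [setLIntegral_const]
    _ = ENNReal.ofReal ((Real.sqrt (2 * Real.pi))⁻¹) * ENNReal.ofReal (b - a) := by
        rw [Real.volume_Icc]
    _ = ENNReal.ofReal ((b - a) * (Real.sqrt (2 * Real.pi))⁻¹) := by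
        rw [← ENNReal.ofReal_mul (by positivity), mul_comm]

/-- Under the anytime FTPL caching policy with learning rates
`η_t = α·sqrt t` (`α > 0`), the probability that the currently requested file `f_t`
is fetched into the cache at slot `t+1` satisfies
`P(f_t ∉ S_t and f_t ∈ S_{t+1}) ≤ 3/(2·α·sqrt(2π)·sqrt(t+1))`. -/
theorem ftpl_anytime_requested_file_fetch_probability
    {Ω : Type*} [MeasureSpace Ω] [IsProbabilityMeasure (ℙ : Measure Ω)]
    (N C : ℕ) (hC : 0 < C) (hCN : C < N)
    (f : ℕ → Fin N)
    (X : ℕ → Fin N → ℝ)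
    (hX : ∀ t i, X t i = ∑ τ ∈ Finset.Ico 1 t, if f τ = i then (1 : ℝ) else 0)
    (γ : Fin N → Ω → ℝ)
    (hγindep : iIndepFun γ ℙ)
    (hγgauss : ∀ i, Measure.map (γ i) ℙ = gaussianReal 0 1)
    (α : ℝ) (hα : 0 < α)
    (S : ℕ → Ω → Finset (Fin N))
    (hScard : ∀ t ω, (S t ω).card = C)
    (hStop : ∀ t ω, ∀ i ∈ S t ω, ∀ j ∉ S t ω,
      X t j + α * Real.sqrt t * γ j ω ≤ X t i + α * Real.sqrt t * γ i ω)
    (t : ℕ) (ht : 1 ≤ t) :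
    ℙ {ω | f t ∉ S t ω ∧ f t ∈ S (t + 1) ω}
      ≤ ENNReal.ofReal (3 / (2 * α * Real.sqrt (2 * Real.pi) * Real.sqrt (t + 1))) := by
  classical
  set k : Fin N := f t with hk
  -- measurable modifications of γ
  have hgaussne : (gaussianReal 0 1 : Measure ℝ) ≠ 0 := IsProbabilityMeasure.ne_zero _
  have hae : ∀ i, AEMeasurable (γ i) ℙ := by
    intro i
    by_contra h
    exact hgaussne (by rw [← hγgauss i, Measure.map_of_not_aemeasurable h])
  set γ' : Fin N → Ω → ℝ := fun i => (hae i).mk (γ i) with hγ'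
  have hmeas' : ∀ i, Measurable (γ' i) := fun i => (hae i).measurable_mk
  have hone : ∀ i, γ i =ᵐ[ℙ] γ' i := fun i => (hae i).ae_eq_mk
  have hall : ∀ᵐ ω ∂(ℙ : Measure Ω), ∀ i, γ i ω = γ' i ω := ae_all_iff.2 hone
  have hgauss' : ∀ i, Measure.map (γ' i) ℙ = gaussianReal 0 1 := fun i => by
    rw [← Measure.map_congr (hone i), hγgauss i]
  -- independence transfer to γ'
  have hindep' : iIndepFun γ' ℙ := by
    rw [iIndepFun_iff_measure_inter_preimage_eq_mul]
    rw [iIndepFun_iff_measure_inter_preimage_eq_mul] at hγindep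
    intro Sfin sets H
    have h1 : (⋂ i ∈ Sfin, γ' i ⁻¹' sets i) =ᵐ[ℙ] (⋂ i ∈ Sfin, γ i ⁻¹' sets i) := by
      apply Filter.eventuallyEq_set.2
      filter_upwards [hall] with ω hω
      simp only [Set.mem_iInter, Set.mem_preimage]
      constructor
      · intro h i hi; rw [hω i]; exact h i hi
      · intro h i hi; rw [← hω i]; exact h i hi
    have h2 : ∀ i, (γ' i ⁻¹' sets i : Set Ω) =ᵐ[ℙ] γ i ⁻¹' sets i := fun i => by
      apply Filter.eventuallyEq_set.2
      filter_upwards [hone i] with ω hω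
      simp only [Set.mem_preimage, hω]
    rw [measure_congr h1, hγindep Sfin H]
    exact Finset.prod_congr rfl fun i _ => (measure_congr (h2 i)).symm
  -- real-number setup
  have htR : (1:ℝ) ≤ (t:ℝ) := by exact_mod_cast ht
  set s : ℝ := Real.sqrt t with hsd
  set s' : ℝ := Real.sqrt ((t:ℝ) + 1) with hs'd
  have hs2 : s ^ 2 = (t:ℝ) := Real.sq_sqrt (by linarith)
  have hs'2 : s' ^ 2 = (t:ℝ) + 1 := Real.sq_sqrt (by linarith)
  have hspos : 0 < s := Real.sqrt_pos.2 (by linarith)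
  have hs'pos : 0 < s' := Real.sqrt_pos.2 (by linarith)
  have hss' : s ≤ s' := Real.sqrt_le_sqrt (by linarith)
  have hηpos : 0 < α * s := mul_pos hα hspos
  have hη'pos : 0 < α * s' := mul_pos hα hs'pos
  have hcast : ((t + 1 : ℕ) : ℝ) = (t:ℝ) + 1 := by push_cast; ring
  -- X bounds
  have hX0 : ∀ j : Fin N, 0 ≤ X t j := by
    intro j; rw [hX]
    apply Finset.sum_nonneg
    intro τ _; positivity
  have hXle : ∀ j : Fin N, X t j ≤ (t:ℝ) - 1 := by
    intro j; rw [hX]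
    calc (∑ τ ∈ Finset.Ico 1 t, if f τ = j then (1:ℝ) else 0)
        ≤ ∑ τ ∈ Finset.Ico 1 t, 1 := by
          apply Finset.sum_le_sum; intro τ _; split <;> norm_num
      _ = ((t - 1 : ℕ) : ℝ) := by rw [Finset.sum_const, Nat.card_Ico]; simp
      _ = (t:ℝ) - 1 := by rw [Nat.cast_sub ht]; simp
  have hXsucc : ∀ j : Fin N, j ≠ k → X (t+1) j = X t j := by
    intro j hj
    rw [hX, hX, Finset.sum_Ico_succ_top ht]
    have : f t ≠ j := fun h => hj (by rw [← h, hk])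
    simp [this]
  have hXk : X (t+1) k = X t k + 1 := by
    rw [hX, hX, Finset.sum_Ico_succ_top ht]
    simp [← hk]
  have hcardκ : C ≤ Fintype.card {x : Fin N // x ≠ k} := by
    rw [Fintype.card_subtype, Finset.filter_ne', Finset.card_erase_of_mem (Finset.mem_univ k),
      Finset.card_univ, Fintype.card_fin]
    omega
  -- interval endpoints
  set u : ({x : Fin N // x ≠ k} → ℝ) → ℝ := fun w =>
    (cthTop C (fun j => X t j.1 + (α * s) * w j) - X t k) / (α * s) with hud
  set l : ({x : Fin N // x ≠ k} → ℝ) → ℝ := fun w =>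
    (cthTop C (fun j => X t j.1 + (α * s') * w j) - X t k - 1) / (α * s') with hld
  set W : Ω → {x : Fin N // x ≠ k} → ℝ :=
    fun ω j => γ' j.1 ω with hWd
  set W₀ : Ω → {x : Fin N // x ≠ k} → ℝ :=
    fun ω j => γ j.1 ω with hW₀d
  -- event inclusion
  have hEsub : {ω | k ∉ S t ω ∧ k ∈ S (t+1) ω}
      ⊆ {ω | l (W₀ ω) ≤ γ k ω ∧ γ k ω ≤ u (W₀ ω)} := by
    rintro ω ⟨h1, h2⟩
    constructor
    · -- lower bound, from k ∈ S (t+1)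
      obtain ⟨T₁, hT₁card, hT₁ne, hT₁eq⟩ :=
        cthTop_exists C (fun j : {x : Fin N // x ≠ k} =>
          X t j.1 + (α * s') * W₀ ω j) hC hcardκ
      have hex : ∃ j ∈ T₁, (j : {x : Fin N // x ≠ k}).1 ∉ S (t+1) ω := by
        by_contra h
        push_neg at h
        have hsub2 : T₁.image Subtype.val ⊆ (S (t+1) ω).erase k := by
          intro x hx
          obtain ⟨j, hj, rfl⟩ := Finset.mem_image.1 hx
          exact Finset.mem_erase.2 ⟨j.2, h j hj⟩
        have hcard1 : (T₁.image Subtype.val).card = C := by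
          rw [Finset.card_image_of_injective _ Subtype.val_injective, hT₁card]
        have hcard2 : ((S (t+1) ω).erase k).card = C - 1 := by
          rw [Finset.card_erase_of_mem h2, hScard]
        have := Finset.card_le_card hsub2
        omega
      obtain ⟨j, hjT, hjnot⟩ := hex
      have h5 : cthTop C (fun j : {x : Fin N // x ≠ k} =>
          X t j.1 + (α * s') * W₀ ω j) ≤ X t j.1 + (α * s') * γ j.1 ω := by
        rw [hT₁eq]
        exact csInf_le ((T₁.finite_toSet.image _).bddBelow)
          ⟨j, Finset.mem_coe.2 hjT, rfl⟩
      have h6 := hStop (t+1) ω k h2 j.1 hjnot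
      rw [hcast] at h6
      have h6' : X (t+1) j.1 + (α * s') * γ j.1 ω ≤ X (t+1) k + (α * s') * γ k ω := by
        have : α * Real.sqrt ((t:ℝ) + 1) = α * s' := by rw [hs'd]
        rw [← this]
        convert h6 using 3 <;> ring
      rw [hXsucc j.1 j.2, hXk] at h6'
      rw [hld, div_le_iff₀ hη'pos]
      have := h5.trans h6'
      linarith [this]
    · -- upper bound, from k ∉ S t
      have hub : X t k + (α * s) * γ k ω ≤ cthTop C
          (fun j : {x : Fin N // x ≠ k} =>
            X t j.1 + (α * s) * W₀ ω j) := by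
        have hT'card : ((S t ω).subtype (fun j => j ≠ k)).card = C := by
          rw [Finset.card_subtype, Finset.filter_true_of_mem, hScard]
          intro j hj
          exact fun hjk => h1 (hjk ▸ hj)
        apply le_cthTop hC hT'card
        intro j hj
        have hjS : (j : Fin N) ∈ S t ω := Finset.mem_subtype.1 hj
        have h7 := hStop t ω j.1 hjS k h1
        have : α * Real.sqrt (t:ℝ) = α * s := by rw [hsd]
        rw [this] at h7
        exact h7
      rw [hud, le_div_iff₀ hηpos]
      linarith [hub]
  -- interval length bound
  have hlen : ∀ w, u w - l w ≤ 3 / (2 * α * s') := by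
    intro w
    rw [hud, hld]
    exact ftpl_len_bound hC hcardκ (fun j => X t j.1) (X t k) (t:ℝ) (hX0 k)
      (fun j => hXle j.1) htR α s s' hα hspos hs'pos hss' hs2 hs'2 w
  -- measurability
  have hgmeas : ∀ (c : ℝ) (j : {x : Fin N // x ≠ k}),
      Measurable (fun w : {x : Fin N // x ≠ k} → ℝ =>
        X t j.1 + c * w j) :=
    fun c j => measurable_const.add (by fun_prop)
  have humeas : Measurable u := by
    rw [hud]
    exact ((measurable_cthTop hC hcardκ _ (hgmeas (α * s))).sub measurable_const).div_const _
  have hlmeas : Measurable l := by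
    rw [hld]
    exact (((measurable_cthTop hC hcardκ _ (hgmeas (α * s'))).sub
      measurable_const).sub measurable_const).div_const _
  set Tset : Set (({x : Fin N // x ≠ k} → ℝ) × ℝ) :=
    {p | l p.1 ≤ p.2} ∩ {p | p.2 ≤ u p.1} with hTsetd
  have hTset : MeasurableSet Tset :=
    (measurableSet_le (hlmeas.comp measurable_fst) measurable_snd).inter
      (measurableSet_le measurable_snd (humeas.comp measurable_fst))
  have hWmeas : Measurable W := measurable_pi_lambda _ fun j => hmeas' j.1
  -- independence of (W, γ' k)
  have hdisj : Disjoint (Finset.univ.erase k) ({k} : Finset (Fin N)) :=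
    Finset.disjoint_singleton_right.2 (Finset.notMem_erase k _)
  have hpair := hindep'.indepFun_finset (Finset.univ.erase k) {k} hdisj hmeas'
  have hZW : IndepFun W (γ' k) ℙ := by
    have hφ : Measurable (fun v : ({k} : Finset (Fin N)) → ℝ =>
        v ⟨k, Finset.mem_singleton_self k⟩) := measurable_pi_apply _
    have hψ : Measurable (fun (v : {x : Fin N // x ∈ Finset.univ.erase k} → ℝ)
        (j : {x : Fin N // x ≠ k}) =>
        v ⟨j.1, Finset.mem_erase.2 ⟨j.2, Finset.mem_univ j.1⟩⟩) :=
      measurable_pi_lambda _ fun j => measurable_pi_apply _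
    exact hpair.comp hψ hφ
  have hmapprod : Measure.map (fun ω => (W ω, γ' k ω)) ℙ = (Measure.map W ℙ).prod (gaussianReal 0 1) := by
    rw [← hgauss' k]
    exact (indepFun_iff_map_prod_eq_prod_map_map hWmeas.aemeasurable
      (hmeas' k).aemeasurable).1 hZW
  have hprobW : IsProbabilityMeasure (Measure.map W ℙ) := Measure.isProbabilityMeasure_map hWmeas.aemeasurable
  -- events
  have hE0E' : {ω | l (W₀ ω) ≤ γ k ω ∧ γ k ω ≤ u (W₀ ω)}
      =ᵐ[(ℙ : Measure Ω)] ((fun ω => (W ω, γ' k ω)) ⁻¹' Tset) := by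
    apply Filter.eventuallyEq_set.2
    filter_upwards [hall] with ω hω
    have hWW : W₀ ω = W ω := funext fun j => hω j.1
    simp only [Set.mem_preimage, hTsetd, Set.mem_inter_iff, Set.mem_setOf_eq,
      hWW, hω k]
  calc ℙ {ω | k ∉ S t ω ∧ k ∈ S (t + 1) ω}
      ≤ ℙ {ω | l (W₀ ω) ≤ γ k ω ∧ γ k ω ≤ u (W₀ ω)} := measure_mono hEsub
    _ = ℙ ((fun ω => (W ω, γ' k ω)) ⁻¹' Tset) := measure_congr hE0E'
    _ = (Measure.map (fun ω => (W ω, γ' k ω)) ℙ) Tset := by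
        rw [Measure.map_apply (hWmeas.prodMk (hmeas' k)) hTset]
    _ = ((Measure.map W ℙ).prod (gaussianReal 0 1)) Tset := by rw [hmapprod]
    _ = ∫⁻ w, gaussianReal 0 1 (Prod.mk w ⁻¹' Tset) ∂(Measure.map W ℙ) := Measure.prod_apply hTset
    _ ≤ ∫⁻ _w, ENNReal.ofReal (3 / (2 * α * s') * (Real.sqrt (2 * Real.pi))⁻¹) ∂(Measure.map W ℙ) := by
        apply lintegral_mono
        intro w
        show (gaussianReal 0 1) (Prod.mk w ⁻¹' Tset)
          ≤ ENNReal.ofReal (3 / (2 * α * s') * (Real.sqrt (2 * Real.pi))⁻¹)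
        have hIcc : Prod.mk w ⁻¹' Tset = Set.Icc (l w) (u w) := by
          ext z; simp [hTsetd, Set.mem_Icc]
        rw [hIcc]
        refine (gauss_Icc_le (l w) (u w)).trans ?_
        apply ENNReal.ofReal_le_ofReal
        exact mul_le_mul_of_nonneg_right (hlen w) (by positivity)
    _ = ENNReal.ofReal (3 / (2 * α * s') * (Real.sqrt (2 * Real.pi))⁻¹) := by
        rw [lintegral_const, measure_univ, mul_one]
    _ = ENNReal.ofReal (3 / (2 * α * Real.sqrt (2 * Real.pi) * s')) := by
        congr 1
        have hsq : (0:ℝ) < Real.sqrt (2 * Real.pi) := Real.sqrt_pos.2 (by positivity)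
        field_simp
end

section
/- For all real numbers a, b, c with 0 < a < b, the Gaussian-type integral satisfies ∫_a^b exp(−(γ + c)²/2) dγ ≤ (b² − a²)/(sqrt(e)·a·b) + (b/a − 1)·|c|. -/
lemma key_aux (x : ℝ) :
    x * Real.exp (-x ^ 2 / 2) ≤ Real.exp (-(1:ℝ)/2) := by
  have h1 : x ≤ Real.exp ((x ^ 2 - 1) / 2) := by
    have := Real.add_one_le_exp ((x ^ 2 - 1) / 2)
    nlinarith [sq_nonneg (x - 1)]
  calc x * Real.exp (-x ^ 2 / 2) ≤ Real.exp ((x ^ 2 - 1) / 2) * Real.exp (-x ^ 2 / 2) := by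
        apply mul_le_mul_of_nonneg_right h1 (Real.exp_nonneg _)
    _ = Real.exp (-(1:ℝ)/2) := by rw [← Real.exp_add]; ring_nf

lemma pointwise_aux (a c γ : ℝ) (ha : 0 < a) (hγ : a ≤ γ) :
    Real.exp (-(γ + c) ^ 2 / 2) ≤ Real.exp (-(1:ℝ)/2) / a + |c| / a := by
  set x := γ + c with hx
  set e := Real.exp (-x ^ 2 / 2) with he
  set E := Real.exp (-(1:ℝ)/2) with hE
  have hxe : x * e ≤ E := key_aux x
  have he1 : e ≤ 1 := by
    rw [he]
    rw [Real.exp_le_one_iff]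
    nlinarith [sq_nonneg x]
  have he0 : 0 < e := Real.exp_pos _
  have hE0 : 0 < E := Real.exp_pos _
  have hE1 : E < 1 := by
    rw [hE, Real.exp_lt_one_iff]; norm_num
  have hd : a - x ≤ |c| := by
    have : -c ≤ |c| := neg_le_abs c
    nlinarith [hγ]
  have hd0 : 0 ≤ |c| := abs_nonneg c
  rw [← add_div, le_div_iff₀ ha]
  -- goal : e * a ≤ E + |c|
  rcases le_or_gt a x with h | h
  · nlinarith
  · rcases le_or_gt x E with h2 | h2
    · nlinarith
    · nlinarith [mul_pos (sub_pos.mpr h) (sub_pos.mpr h2)]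


/-- For all real numbers `a, b, c` with `0 < a < b`,
`∫_a^b exp(−(γ + c)²/2) dγ ≤ (b² − a²)/(sqrt e · a · b) + (b/a − 1)·|c|`. -/
theorem gaussian_type_integral_bound
    (a b c : ℝ) (ha : 0 < a) (hab : a < b) :
    (∫ γ in a..b, Real.exp (-(γ + c) ^ 2 / 2))
      ≤ (b ^ 2 - a ^ 2) / (Real.sqrt (Real.exp 1) * a * b) + (b / a - 1) * |c| := by
  have hb : 0 < b := ha.trans hab
  set E := Real.exp (-(1:ℝ)/2) with hE
  have hE0 : 0 < E := Real.exp_pos _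
  have h1 : (∫ γ in a..b, Real.exp (-(γ + c) ^ 2 / 2)) ≤ (b - a) * (E / a + |c| / a) := by
    calc (∫ γ in a..b, Real.exp (-(γ + c) ^ 2 / 2))
        ≤ ∫ _ in a..b, (E / a + |c| / a) := by
          apply intervalIntegral.integral_mono_on hab.le
          · exact (Continuous.intervalIntegrable (by continuity) a b)
          · exact intervalIntegrable_const
          · intro γ hγ
            exact pointwise_aux a c γ ha hγ.1
      _ = (b - a) * (E / a + |c| / a) := by
          rw [intervalIntegral.integral_const, smul_eq_mul]
  have hsqrt : Real.sqrt (Real.exp 1) = Real.exp (1/2 : ℝ) := by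
    rw [← Real.exp_half]
  have hEinv : E = (Real.exp (1/2 : ℝ))⁻¹ := by
    rw [hE, ← Real.exp_neg]; norm_num
  refine h1.trans ?_
  rw [hsqrt]
  set s := Real.exp (1/2 : ℝ) with hs
  have hs0 : 0 < s := Real.exp_pos _
  have key : (b - a) * (E / a) ≤ (b ^ 2 - a ^ 2) / (s * a * b) := by
    rw [hEinv, show (b - a) * (s⁻¹ / a) = (b - a) / (s * a) by field_simp,
      div_le_div_iff₀ (by positivity) (by positivity)]
    nlinarith [mul_pos ha hb, mul_pos (sub_pos.mpr hab) (mul_pos ha hb),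
      mul_pos hs0 (mul_pos (sub_pos.mpr hab) (mul_pos ha hb))]
  have key2 : (b - a) * (|c| / a) = (b / a - 1) * |c| := by
    field_simp
  linarith [key, key2.le, mul_add (b-a) (E/a) (|c|/a)]
end

section
/- Let Y be a finite nonempty subset of ℝ^N, η > 0, and define Φ(x) = E_γ[max_{y∈Y} ⟨y, x + η·γ⟩] for γ an N-dimensional standard Gaussian vector. If at the point x₀ ∈ ℝ^N the maximizer y*(γ) := argmax_{y∈Y} ⟨y, x₀ + η·γ⟩ is unique for almost every γ, then Φ is differentiable at x₀ and ∇Φ(x₀) = E_γ[y*(γ)]. -/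
open MeasureTheory ProbabilityTheory Real
open scoped RealInnerProductSpace

lemma my_integrable_id_gaussianReal : Integrable (id : ℝ → ℝ) (gaussianReal 0 1) := by
  rw [gaussianReal_of_var_ne_zero 0 one_ne_zero,
    integrable_withDensity_iff (measurable_gaussianPDF 0 1)
      (Filter.Eventually.of_forall fun x => ENNReal.ofReal_lt_top)]
  have h1 : Integrable (fun x : ℝ => x * Real.exp (-(2⁻¹) * x ^ 2)) := by
    simpa [Real.rpow_one] using
      integrable_rpow_mul_exp_neg_mul_sq (b := 2⁻¹) (by norm_num) (s := 1) (by norm_num)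
  have h2 := h1.const_mul (Real.sqrt (2 * π))⁻¹
  refine h2.congr (Filter.Eventually.of_forall fun x => ?_)
  simp only
  simp only [gaussianPDF_def]
  rw [ENNReal.toReal_ofReal (gaussianPDFReal_nonneg _ _ _)]
  unfold gaussianPDFReal
  push_cast
  ring_nf
  simp [mul_comm, mul_assoc, mul_left_comm]

/-- Let `Y` be a finite nonempty subset of `ℝ^N`, `η > 0`, and
`Φ(x) = E_γ[max_{y∈Y} ⟨y, x + η·γ⟩]` for `γ` an `N`-dimensional standard Gaussian
vector. If at the point `x₀` the maximizer `y*(γ) = argmax_{y∈Y} ⟨y, x₀ + η·γ⟩` is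
unique for almost every `γ`, then `Φ` is differentiable at `x₀` with
`∇Φ(x₀) = E_γ[y*(γ)]`. -/
theorem gradient_of_smoothed_potential
    {Ω : Type*} [MeasureSpace Ω] [IsProbabilityMeasure (ℙ : Measure Ω)]
    (N : ℕ)
    (γ : Ω → EuclideanSpace ℝ (Fin N))
    (hγmeas : Measurable γ)
    (hγindep : iIndepFun (fun i ω => γ ω i) ℙ)
    (hγgauss : ∀ i, Measure.map (fun ω => γ ω i) ℙ = gaussianReal 0 1)
    (Y : Finset (EuclideanSpace ℝ (Fin N))) (hY : Y.Nonempty)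
    (η : ℝ) (hη : 0 < η)
    (x₀ : EuclideanSpace ℝ (Fin N))
    -- `ystar ω` is the a.e.-unique maximizer of `y ↦ ⟨y, x₀ + η·γ ω⟩` over `Y`
    (ystar : Ω → EuclideanSpace ℝ (Fin N))
    (hstar : ∀ᵐ ω ∂(ℙ : Measure Ω), ystar ω ∈ Y ∧
      ∀ y ∈ Y, y ≠ ystar ω → ⟪y, x₀ + η • γ ω⟫ < ⟪ystar ω, x₀ + η • γ ω⟫) :
    HasGradientAt (fun x => ∫ ω, Y.sup' hY (fun y => ⟪y, x + η • γ ω⟫))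
      (∫ ω, ystar ω) x₀ := by
  classical

  set f : EuclideanSpace ℝ (Fin N) → Ω → ℝ := fun x ω => Y.sup' hY (fun y => ⟪y, x + η • γ ω⟫) with hfdef
  set M₀ : ℝ := Y.sup' hY (fun y => ‖y‖) with hM₀def
  have hM₀ : ∀ y ∈ Y, ‖y‖ ≤ M₀ := fun y hy => Finset.le_sup' _ hy
  have hM₀nonneg : 0 ≤ M₀ := by
    obtain ⟨y, hy⟩ := hY
    exact le_trans (norm_nonneg y) (hM₀ y hy)
  -- coordinates of γ are integrable
  have hcoord : ∀ i, Integrable (fun ω => γ ω i) ℙ := by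
    intro i
    have hm : Measurable fun ω => γ ω i := (measurable_pi_apply i).comp ((WithLp.measurable_ofLp _ _).comp hγmeas)
    have h := my_integrable_id_gaussianReal
    rw [← hγgauss i] at h
    have := (integrable_map_measure aestronglyMeasurable_id hm.aemeasurable).mp h
    simpa [Function.comp] using this
  -- each linear functional of x + η•γ is integrable
  have hInner : ∀ (y : EuclideanSpace ℝ (Fin N)) (x : EuclideanSpace ℝ (Fin N)), Integrable (fun ω => (⟪y, x + η • γ ω⟫ : ℝ)) ℙ := by
    intro y x
    have h1 : Integrable (fun ω => ∑ i, y i * γ ω i) ℙ :=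
      integrable_finset_sum _ fun i _ => (hcoord i).const_mul (y i)
    have h2 := ((h1.const_mul η).add (integrable_const (⟪y, x⟫ : ℝ)))
    refine h2.congr (Filter.Eventually.of_forall fun ω => ?_)
    simp only [Pi.add_apply]
    rw [inner_add_right, real_inner_smul_right]
    have : (⟪y, γ ω⟫ : ℝ) = ∑ i, y i * γ ω i := by
      simp [PiLp.inner_apply, RCLike.inner_apply, conj_trivial]
      exact Finset.sum_congr rfl fun _ _ => mul_comm _ _
    rw [this]; ring
  have hγE : Measurable (fun ω => x₀ + η • γ ω) := (hγmeas.const_smul η).const_add x₀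
  -- measurability of f x
  have hmeasf : ∀ x : EuclideanSpace ℝ (Fin N), Measurable (f x) := by
    intro x
    have h0 : Measurable fun ω => x + η • γ ω := (hγmeas.const_smul η).const_add x
    have heq : f x = Y.sup' hY (fun y ω => ⟪y, x + η • γ ω⟫) := by
      funext ω; simp [hfdef, Finset.sup'_apply]
    rw [heq]
    exact Finset.measurable_sup' hY fun y _ => ((innerSL ℝ y).continuous.measurable).comp h0
  -- integrability of f x
  have hIf : ∀ x : EuclideanSpace ℝ (Fin N), Integrable (f x) ℙ := by
    intro x
    refine (integrable_finset_sum Y (fun y _ => (hInner y x).abs)).mono'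
      (hmeasf x).aestronglyMeasurable (Filter.Eventually.of_forall fun ω => ?_)
    obtain ⟨y₀, hy₀, hEq⟩ := Y.exists_mem_eq_sup' hY (fun y => (⟪y, x + η • γ ω⟫ : ℝ))
    rw [Real.norm_eq_abs, hfdef]
    simp only
    rw [hEq]
    exact Finset.single_le_sum (f := fun y => |(⟪y, x + η • γ ω⟫ : ℝ)|)
      (fun y _ => abs_nonneg _) hy₀
  -- a.e. strong measurability of ystar
  set A : EuclideanSpace ℝ (Fin N) → Set Ω := fun y => ⋂ z ∈ Y.erase y, {ω | (⟪z, x₀ + η • γ ω⟫ : ℝ) < ⟪y, x₀ + η • γ ω⟫}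
    with hAdef
  have hA : ∀ y, MeasurableSet (A y) := by
    intro y
    refine MeasurableSet.biInter (Y.erase y).countable_toSet fun z _ => ?_
    exact measurableSet_lt (((innerSL ℝ z).continuous.measurable).comp hγE)
      (((innerSL ℝ y).continuous.measurable).comp hγE)
  have hsm : AEStronglyMeasurable ystar ℙ := by
    refine ⟨fun ω => ∑ y ∈ Y, Set.indicator (A y) (fun _ => y) ω,
      (Finset.measurable_sum Y fun y _ =>
        measurable_const.indicator (hA y)).stronglyMeasurable, ?_⟩
    filter_upwards [hstar] with ω hω
    obtain ⟨hmem, hlt⟩ := hω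
    have hin : ω ∈ A (ystar ω) := by
      simp only [hAdef, Set.mem_iInter]
      intro z hz
      rcases Finset.mem_erase.mp hz with ⟨hne, hzY⟩
      exact hlt z hzY hne
    have hnot : ∀ y ∈ Y, y ≠ ystar ω → ω ∉ A y := by
      intro y hy hne hin'
      have h1 : (⟪ystar ω, x₀ + η • γ ω⟫ : ℝ) < ⟪y, x₀ + η • γ ω⟫ := by
        have := Set.mem_iInter.mp hin' (ystar ω)
        simpa using Set.mem_iInter.mp this (Finset.mem_erase.mpr ⟨fun h => hne h.symm, hmem⟩)
      exact absurd (hlt y hy hne) (not_lt.mpr h1.le)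
    rw [Finset.sum_eq_single_of_mem (ystar ω) hmem
      (fun b hb hbne => Set.indicator_of_notMem (hnot b hb hbne) _),
      Set.indicator_of_mem hin]
  have hIystar : Integrable ystar ℙ := by
    refine (integrable_const M₀).mono' hsm ?_
    filter_upwards [hstar] with ω hω
    exact hM₀ _ hω.1
  -- Lipschitz estimate on f
  have hsplit : ∀ (y x₁ x₂ : EuclideanSpace ℝ (Fin N)) ω, (⟪y, x₁ + η • γ ω⟫ : ℝ) = ⟪y, x₂ + η • γ ω⟫ + ⟪y, x₁ - x₂⟫ := by
    intro y x₁ x₂ ω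
    rw [← inner_add_right]
    congr 1
    abel
  have hCS : ∀ (y : EuclideanSpace ℝ (Fin N)), y ∈ Y → ∀ v : EuclideanSpace ℝ (Fin N), |(⟪y, v⟫ : ℝ)| ≤ M₀ * ‖v‖ := by
    intro y hy v
    exact (abs_real_inner_le_norm y v).trans
      (mul_le_mul_of_nonneg_right (hM₀ y hy) (norm_nonneg v))
  have hLip : ∀ (x₁ x₂ : EuclideanSpace ℝ (Fin N)) ω, f x₁ ω - f x₂ ω ≤ M₀ * ‖x₁ - x₂‖ := by
    intro x₁ x₂ ω
    rw [sub_le_iff_le_add]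
    refine Finset.sup'_le _ _ fun y hy => ?_
    have h2 : (⟪y, x₂ + η • γ ω⟫ : ℝ) ≤ f x₂ ω :=
      Finset.le_sup' (fun y => (⟪y, x₂ + η • γ ω⟫ : ℝ)) hy
    have h3 : (⟪y, x₁ - x₂⟫ : ℝ) ≤ M₀ * ‖x₁ - x₂‖ :=
      (le_abs_self _).trans (hCS y hy _)
    calc (⟪y, x₁ + η • γ ω⟫ : ℝ) = ⟪y, x₂ + η • γ ω⟫ + ⟪y, x₁ - x₂⟫ := hsplit y x₁ x₂ ω
      _ ≤ M₀ * ‖x₁ - x₂‖ + f x₂ ω := by linarith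
  -- the remainder
  set r : EuclideanSpace ℝ (Fin N) → Ω → ℝ := fun x ω => f x ω - f x₀ ω - ⟪ystar ω, x - x₀⟫ with hrdef
  have hrabs : ∀ᵐ ω ∂(ℙ : Measure Ω), ∀ x : EuclideanSpace ℝ (Fin N), |r x ω| ≤ 2 * M₀ * ‖x - x₀‖ := by
    filter_upwards [hstar] with ω hω
    intro x
    have h1 := hLip x x₀ ω
    have h2 := hLip x₀ x ω
    rw [show x₀ - x = -(x - x₀) by abel, norm_neg] at h2
    have h3 : |(⟪ystar ω, x - x₀⟫ : ℝ)| ≤ M₀ * ‖x - x₀‖ := hCS _ hω.1 _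
    rw [abs_le] at h3 ⊢
    constructor <;> simp only [hrdef] <;> nlinarith
  -- a.e. pointwise limit
  have hlim : ∀ᵐ ω ∂(ℙ : Measure Ω),
      Filter.Tendsto (fun x => ‖x - x₀‖⁻¹ * |r x ω|) (nhds x₀) (nhds 0) := by
    filter_upwards [hstar] with ω hω
    obtain ⟨hmem, hlt⟩ := hω
    have hsup : ∀ᶠ x in nhds x₀, ∀ v : EuclideanSpace ℝ (Fin N), ‖v - x₀‖ ≤ ‖x - x₀‖ →
        f v ω = ⟪ystar ω, v + η • γ ω⟫ := by
      by_cases hsingle : (Y.erase (ystar ω)).Nonempty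
      · set g : EuclideanSpace ℝ (Fin N) → ℝ := fun y => ⟪y, x₀ + η • γ ω⟫ with hgdef
        set δ : ℝ := g (ystar ω) - (Y.erase (ystar ω)).sup' hsingle g with hδdef
        have hδ : 0 < δ := by
          obtain ⟨z, hz, hzeq⟩ := (Y.erase (ystar ω)).exists_mem_eq_sup' hsingle g
          rcases Finset.mem_erase.mp hz with ⟨hne, hzY⟩
          have := hlt z hzY hne
          simp only [hδdef, hzeq]
          exact sub_pos.mpr this
        have hpos : 0 < δ / (2 * M₀ + 1) := div_pos hδ (by positivity)
        filter_upwards [Metric.ball_mem_nhds x₀ hpos] with x hx v hv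
        rw [Metric.mem_ball, dist_eq_norm] at hx
        have hvsmall : 2 * M₀ * ‖v - x₀‖ < δ := by
          have h1 : (2 * M₀ + 1) * ‖v - x₀‖ < δ := by
            have := hv.trans_lt hx
            calc (2 * M₀ + 1) * ‖v - x₀‖ < (2 * M₀ + 1) * (δ / (2 * M₀ + 1)) := by
                  exact mul_lt_mul_of_pos_left this (by positivity)
              _ = δ := by field_simp
          nlinarith [norm_nonneg (v - x₀)]
        refine le_antisymm (Finset.sup'_le _ _ fun y hy => ?_)
          (Finset.le_sup' (fun y => (⟪y, v + η • γ ω⟫ : ℝ)) hmem)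
        by_cases hne : y = ystar ω
        · rw [hne]
        · have e1 := hsplit y v x₀ ω
          have e5 := hsplit (ystar ω) v x₀ ω
          have e2 : g y ≤ g (ystar ω) - δ := by
            have : g y ≤ (Y.erase (ystar ω)).sup' hsingle g :=
              Finset.le_sup' g (Finset.mem_erase.mpr ⟨hne, hy⟩)
            simp only [hδdef] at *
            linarith
          have e3 := abs_le.mp (hCS y hy (v - x₀))
          have e4 := abs_le.mp (hCS _ hmem (v - x₀))
          simp only [hgdef] at e2
          linarith [e3.2, e4.1]
      · refine Filter.Eventually.of_forall fun x v _ => ?_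
        refine le_antisymm (Finset.sup'_le _ _ fun y hy => ?_)
          (Finset.le_sup' (fun y => (⟪y, v + η • γ ω⟫ : ℝ)) hmem)
        have : y = ystar ω := by
          by_contra hne
          exact hsingle ⟨y, Finset.mem_erase.mpr ⟨hne, hy⟩⟩
        rw [this]
    have hzero : ∀ᶠ x in nhds x₀, ‖x - x₀‖⁻¹ * |r x ω| = 0 := by
      filter_upwards [hsup] with x hx
      have hfx : f x ω = ⟪ystar ω, x + η • γ ω⟫ := hx x le_rfl
      have hfx₀ : f x₀ ω = ⟪ystar ω, x₀ + η • γ ω⟫ := by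
        refine hx x₀ ?_
        simp [norm_nonneg]
      have : r x ω = 0 := by
        simp only [hrdef, hfx, hfx₀]
        rw [← inner_sub_right, ← inner_sub_right,
          show (x + η • γ ω) - (x₀ + η • γ ω) - (x - x₀) = 0 by abel, inner_zero_right]
      rw [this]
      simp
    exact Filter.Tendsto.congr' (hzero.mono fun x hx => hx.symm) tendsto_const_nhds
  -- inner products with ystar are integrable
  have hIinner : ∀ v : EuclideanSpace ℝ (Fin N), Integrable (fun ω => (⟪ystar ω, v⟫ : ℝ)) ℙ := by
    intro v
    refine (integrable_const (M₀ * ‖v‖)).mono' (hsm.inner aestronglyMeasurable_const) ?_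
    filter_upwards [hstar] with ω hω
    rw [Real.norm_eq_abs]
    exact hCS _ hω.1 v
  -- dominated convergence
  have key : Filter.Tendsto (fun x => ∫ ω, ‖x - x₀‖⁻¹ * |r x ω|) (nhds x₀) (nhds 0) := by
    have h := tendsto_integral_filter_of_dominated_convergence (μ := (ℙ : Measure Ω))
      (F := fun x ω => ‖x - x₀‖⁻¹ * |r x ω|) (f := fun _ => (0 : ℝ))
      (bound := fun _ => 2 * M₀)
      (Filter.Eventually.of_forall fun x => by
        show AEStronglyMeasurable (fun ω => ‖x - x₀‖⁻¹ * |r x ω|) ℙ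
        have h1 : AEStronglyMeasurable (r x) ℙ :=
          (((hmeasf x).aestronglyMeasurable.sub (hmeasf x₀).aestronglyMeasurable).sub
            (hsm.inner aestronglyMeasurable_const))
        refine (h1.norm.const_mul (‖x - x₀‖⁻¹)).congr
          (Filter.Eventually.of_forall fun ω => ?_)
        show ‖x - x₀‖⁻¹ * ‖r x ω‖ = ‖x - x₀‖⁻¹ * |r x ω|
        rw [Real.norm_eq_abs])
      (Filter.Eventually.of_forall fun x => by
        filter_upwards [hrabs] with ω hω
        have h1 := hω x
        rw [Real.norm_eq_abs, abs_of_nonneg (by positivity)]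
        rcases eq_or_ne x x₀ with h | h
        · subst h
          simp [hM₀nonneg]
        · have hxpos : 0 < ‖x - x₀‖ := by
            rw [norm_pos_iff, sub_ne_zero]; exact h
          calc ‖x - x₀‖⁻¹ * |r x ω| ≤ ‖x - x₀‖⁻¹ * (2 * M₀ * ‖x - x₀‖) := by
                exact mul_le_mul_of_nonneg_left h1 (by positivity)
            _ = 2 * M₀ := by field_simp)
      (integrable_const _) hlim
    simpa using h
  -- conclusion
  rw [hasGradientAt_iff_tendsto]
  show Filter.Tendsto
    (fun x => ‖x - x₀‖⁻¹ * ‖(∫ ω, f x ω) - (∫ ω, f x₀ ω) - ⟪∫ ω, ystar ω, x - x₀⟫‖)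
    (nhds x₀) (nhds 0)
  refine squeeze_zero (fun x => by positivity) (fun x => ?_) key
  have hrepr : (∫ ω, f x ω) - (∫ ω, f x₀ ω) - ⟪∫ ω, ystar ω, x - x₀⟫ = ∫ ω, r x ω := by
    have h1 : (⟪∫ ω, ystar ω, x - x₀⟫ : ℝ) = ∫ ω, (⟪ystar ω, x - x₀⟫ : ℝ) := by
      rw [real_inner_comm, ← integral_inner hIystar (x - x₀)]
      simp_rw [real_inner_comm]
    have hfi : Integrable (fun ω => f x ω - f x₀ ω) ℙ := (hIf x).sub (hIf x₀)
    rw [h1, ← integral_sub (hIf x) (hIf x₀), ← integral_sub hfi (hIinner (x - x₀))]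
  calc ‖x - x₀‖⁻¹ * ‖(∫ ω, f x ω) - (∫ ω, f x₀ ω) - ⟪∫ ω, ystar ω, x - x₀⟫‖
      = ‖x - x₀‖⁻¹ * ‖∫ ω, r x ω‖ := by rw [hrepr]
    _ ≤ ‖x - x₀‖⁻¹ * ∫ ω, ‖r x ω‖ := by
        exact mul_le_mul_of_nonneg_left (norm_integral_le_integral_norm _)
          (by positivity)
    _ = ∫ ω, ‖x - x₀‖⁻¹ * |r x ω| := by
        rw [← integral_const_mul]
        simp_rw [Real.norm_eq_abs]
end

section
/- Let Y be a finite nonempty subset of ℝ^N, let 0 < η ≤ η′, and for x ∈ ℝ^N define Φ_η(x) = E_γ[max_{y∈Y} ⟨y, x + η·γ⟩] where γ is an N-dimensional standard Gaussian vector. Then for every x, Φ_{η′}(x) − Φ_η(x) ≤ (η′ − η)·E_γ[max_{y∈Y} ⟨y, γ⟩]. -/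
open MeasureTheory ProbabilityTheory Real
open scoped RealInnerProductSpace

lemma my_integrable_sup' {Ω : Type*} [MeasureSpace Ω] {α : Type*}
    (Y : Finset α) (hY : Y.Nonempty) (f : α → Ω → ℝ)
    (h : ∀ y ∈ Y, Integrable (f y) ℙ) :
    Integrable (fun ω => Y.sup' hY (fun y => f y ω)) ℙ := by
  induction hY using Finset.Nonempty.cons_induction with
  | singleton a => simpa using h a (by simp)
  | cons a s ha hs ih =>
      have he : (fun ω => (Finset.cons a s ha).sup' (Finset.cons_nonempty ha) fun y => f y ω)
          = fun ω => f a ω ⊔ s.sup' hs fun y => f y ω := by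
        ext ω; rw [Finset.sup'_cons]
      rw [he]
      exact (h a (by simp)).sup (ih fun y hy => h y (Finset.mem_cons_of_mem hy))

/-- Let `Y` be a finite nonempty subset of `ℝ^N`, `0 < η ≤ η′`, and
`Φ_η(x) = E_γ[max_{y∈Y} ⟨y, x + η·γ⟩]` for `γ` an `N`-dimensional standard Gaussian
vector. Then for every `x`, `Φ_{η′}(x) − Φ_η(x) ≤ (η′ − η)·E_γ[max_{y∈Y} ⟨y, γ⟩]`. -/
theorem smoothed_potential_rate_monotonicity
    {Ω : Type*} [MeasureSpace Ω] [IsProbabilityMeasure (ℙ : Measure Ω)]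
    (N : ℕ)
    (γ : Ω → EuclideanSpace ℝ (Fin N))
    (hγmeas : Measurable γ)
    (hγindep : iIndepFun (fun i ω => γ ω i) ℙ)
    (hγgauss : ∀ i, Measure.map (fun ω => γ ω i) ℙ = gaussianReal 0 1)
    (Y : Finset (EuclideanSpace ℝ (Fin N))) (hY : Y.Nonempty)
    (η η' : ℝ) (hη : 0 < η) (hηη' : η ≤ η')
    (x : EuclideanSpace ℝ (Fin N)) :
    (∫ ω, Y.sup' hY (fun y => ⟪y, x + η' • γ ω⟫))
        - (∫ ω, Y.sup' hY (fun y => ⟪y, x + η • γ ω⟫))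
      ≤ (η' - η) * ∫ ω, Y.sup' hY (fun y => ⟪y, γ ω⟫) := by
  -- integrability of coordinates
  have hcoord : ∀ i, Integrable (fun ω => γ ω i) ℙ := by
    intro i
    have h := my_integrable_id_gaussianReal
    rw [← hγgauss i] at h
    exact (integrable_map_measure h.1 (((EuclideanSpace.proj i).continuous.measurable.comp hγmeas).aemeasurable)).mp h
  have hinner : ∀ y : EuclideanSpace ℝ (Fin N), Integrable (fun ω => ⟪y, γ ω⟫) ℙ := by
    intro y
    have : (fun ω => ⟪y, γ ω⟫) = fun ω => ∑ i, y i * γ ω i := by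
      ext ω; simp [PiLp.inner_apply, mul_comm]
    rw [this]
    exact integrable_finset_sum _ fun i _ => (hcoord i).const_mul _
  have haff : ∀ (v : EuclideanSpace ℝ (Fin N)) (t : ℝ) (y : EuclideanSpace ℝ (Fin N)),
      (fun ω => ⟪y, v + t • γ ω⟫) = fun ω => ⟪y, v⟫ + t * ⟪y, γ ω⟫ := by
    intro v t y; ext ω; rw [inner_add_right, real_inner_smul_right]
  have hint : ∀ (v : EuclideanSpace ℝ (Fin N)) (t : ℝ),
      Integrable (fun ω => Y.sup' hY (fun y => ⟪y, v + t • γ ω⟫)) ℙ := by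
    intro v t
    refine my_integrable_sup' Y hY _ fun y _ => ?_
    rw [haff]
    exact (integrable_const _).add ((hinner y).const_mul t)
  have hintC : Integrable (fun ω => Y.sup' hY (fun y => ⟪y, γ ω⟫)) ℙ :=
    my_integrable_sup' Y hY _ fun y _ => hinner y
  -- pointwise bound
  have hpt : ∀ ω, Y.sup' hY (fun y => ⟪y, x + η' • γ ω⟫)
      ≤ Y.sup' hY (fun y => ⟪y, x + η • γ ω⟫)
        + (η' - η) * Y.sup' hY (fun y => ⟪y, γ ω⟫) := by
    intro ω
    refine Finset.sup'_le _ _ fun y hy => ?_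
    have hdec : ⟪y, x + η' • γ ω⟫ = ⟪y, x + η • γ ω⟫ + (η' - η) * ⟪y, γ ω⟫ := by
      simp only [inner_add_right, real_inner_smul_right]; ring
    rw [hdec]
    exact add_le_add (Finset.le_sup' (fun z => ⟪z, x + η • γ ω⟫) hy)
      (mul_le_mul_of_nonneg_left (Finset.le_sup' (fun z => ⟪z, γ ω⟫) hy) (sub_nonneg.2 hηη'))
  rw [sub_le_iff_le_add]
  calc (∫ ω, Y.sup' hY (fun y => ⟪y, x + η' • γ ω⟫))
      ≤ ∫ ω, (Y.sup' hY (fun y => ⟪y, x + η • γ ω⟫)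
          + (η' - η) * Y.sup' hY (fun y => ⟪y, γ ω⟫)) :=
        integral_mono (hint x η') ((hint x η).add (hintC.const_mul _)) hpt
    _ = (η' - η) * (∫ ω, Y.sup' hY (fun y => ⟪y, γ ω⟫))
          + ∫ ω, Y.sup' hY (fun y => ⟪y, x + η • γ ω⟫) := by
        rw [integral_add (hint x η) (hintC.const_mul _), integral_const_mul, add_comm]
end
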